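/- (Shifted spectral-gap inequality for the Fokker–Planck operator) Let Y = L²(ℝ², e^{|η|²/4} dη) with inner product ⟨f,g⟩_Y = ∫ f g e^{|η|²/4} dη, and L = Δ + (1/2)η·∇ + 1. Then for every smooth rapidly decaying W with ∫_{ℝ²} W dη = 0: ⟨W, LW⟩_Y = ‖W‖²_Y − ‖∇W‖²_Y ≤ −(1/12)‖W‖²_Y − (1/96)‖ηW‖²_Y − (1/6)‖∇W‖²_Y. -/

import Mathlib

open Real MeasureTheory Filter Set

noncomputable section

/-- First partial derivative. -/
def pd1 (f : ℝ × ℝ → ℝ) (p : ℝ × ℝ) : ℝ := deriv (fun x => f (x, p.2)) p.1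

/-- Second partial derivative. -/
def pd2 (f : ℝ × ℝ → ℝ) (p : ℝ × ℝ) : ℝ := deriv (fun y => f (p.1, y)) p.2

/-- The Gaussian weight `e^{|η|²/4}` of the space `Y`. -/
def wt (η : ℝ × ℝ) : ℝ := Real.exp ((η.1 ^ 2 + η.2 ^ 2) / 4)

/-- The Fokker–Planck operator `L = Δ + (1/2) η·∇ + 1`. -/
def LFP (W : ℝ × ℝ → ℝ) (η : ℝ × ℝ) : ℝ :=
  pd1 (pd1 W) η + pd2 (pd2 W) η + (1 / 2) * (η.1 * pd1 W η + η.2 * pd2 W η) + W η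

namespace FP

/-- 1D Gaussian weight. -/
def p (x : ℝ) : ℝ := Real.exp (-x ^ 2 / 4)

lemma p_pos (x : ℝ) : 0 < p x := Real.exp_pos _
lemma p_nonneg (x : ℝ) : 0 ≤ p x := (p_pos x).le
lemma p_le_one (x : ℝ) : p x ≤ 1 := by
  rw [p, Real.exp_le_one_iff]
  nlinarith [sq_nonneg x]

lemma continuous_p : Continuous p := by
  unfold p; fun_prop

lemma hasDerivAt_p (x : ℝ) : HasDerivAt p (-(x / 2) * p x) x := by
  have h : HasDerivAt (fun x : ℝ => -x ^ 2 / 4) (-(x / 2)) x := by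
    have := ((hasDerivAt_pow 2 x).neg).div_const 4
    refine this.congr_deriv ?_
    ring
  have := h.exp
  refine this.congr_deriv ?_
  · rw [p]; ring

lemma integrable_p : Integrable p := by
  have h := integrable_exp_neg_mul_sq (by norm_num : (0:ℝ) < 1/4)
  have e : (fun x : ℝ => Real.exp (-(1/4) * x ^ 2)) = p := by
    funext x; rw [p]; ring_nf
  rwa [e] at h

lemma integrable_q8 : Integrable (fun x : ℝ => Real.exp (-x ^ 2 / 8)) := by
  have h := integrable_exp_neg_mul_sq (by norm_num : (0:ℝ) < 1/8)
  have e : (fun x : ℝ => Real.exp (-(1/8) * x ^ 2)) = fun x : ℝ => Real.exp (-x ^ 2 / 8) := by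
    funext x; ring_nf
  rwa [e] at h

lemma pow_le_exp_aux (n : ℕ) (x : ℝ) :
    |x| ^ n ≤ (1 + (8 * n : ℝ) ^ n) * Real.exp (x ^ 2 / 8) := by
  have hexp1 : (1:ℝ) ≤ Real.exp (x ^ 2 / 8) := by
    rw [Real.one_le_exp_iff]; positivity
  rcases Nat.eq_zero_or_pos n with hn | hn
  · subst hn
    simp only [pow_zero, mul_zero]
    nlinarith
  -- x^2 ≤ 8n * exp (x^2/(8n))
  have h8n : (0:ℝ) < 8 * n := by positivity
  have h1 : x ^ 2 / (8 * n) ≤ Real.exp (x ^ 2 / (8 * n)) := by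
    have := Real.add_one_le_exp (x ^ 2 / (8 * n)); linarith
  have h2 : x ^ 2 ≤ (8 * n : ℝ) * Real.exp (x ^ 2 / (8 * n)) := by
    have := mul_le_mul_of_nonneg_left h1 h8n.le
    calc x ^ 2 = (8 * n : ℝ) * (x ^ 2 / (8 * n)) := by field_simp
    _ ≤ (8 * n : ℝ) * Real.exp (x ^ 2 / (8 * n)) := this
  have h3 : (x ^ 2) ^ n ≤ ((8 * n : ℝ) * Real.exp (x ^ 2 / (8 * n))) ^ n :=
    pow_le_pow_left₀ (sq_nonneg x) h2 n
  have h4 : ((8 * n : ℝ) * Real.exp (x ^ 2 / (8 * n))) ^ n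
      = (8 * n : ℝ) ^ n * Real.exp (x ^ 2 / 8) := by
    rw [mul_pow, ← Real.exp_nat_mul]
    congr 2
    field_simp
  have h5 : |x| ^ n ≤ 1 + (x ^ 2) ^ n := by
    have habs : (0:ℝ) ≤ |x| ^ n := by positivity
    have : (|x| ^ n) ^ 2 = (x ^ 2) ^ n := by
      rw [← pow_mul, mul_comm, pow_mul, sq_abs]
    nlinarith [sq_nonneg (|x| ^ n - 1)]
  calc |x| ^ n ≤ 1 + (x ^ 2) ^ n := h5
  _ ≤ 1 * Real.exp (x ^ 2 / 8) + (8 * n : ℝ) ^ n * Real.exp (x ^ 2 / 8) := by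
      rw [one_mul]
      refine add_le_add hexp1 ?_
      rw [← h4] at *
      calc (x ^ 2) ^ n ≤ ((8 * n : ℝ) * Real.exp (x ^ 2 / (8 * n))) ^ n := h3
      _ = _ := rfl
  _ = (1 + (8 * n : ℝ) ^ n) * Real.exp (x ^ 2 / 8) := by ring

lemma poly_p_le (n : ℕ) (x : ℝ) :
    |x| ^ n * p x ≤ (1 + (8 * n : ℝ) ^ n) * Real.exp (-x ^ 2 / 8) := by
  have hsplit : p x = Real.exp (-x ^ 2 / 8) * Real.exp (-x ^ 2 / 8) := by
    rw [p, ← Real.exp_add]; ring_nf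
  have key : |x| ^ n * Real.exp (-x ^ 2 / 8) ≤ (1 + (8 * n : ℝ) ^ n) := by
    have h := mul_le_mul_of_nonneg_right (pow_le_exp_aux n x) (Real.exp_pos (-x ^ 2 / 8)).le
    calc |x| ^ n * Real.exp (-x ^ 2 / 8)
        ≤ (1 + (8 * n : ℝ) ^ n) * Real.exp (x ^ 2 / 8) * Real.exp (-x ^ 2 / 8) := h
    _ = (1 + (8 * n : ℝ) ^ n) := by
        rw [mul_assoc, ← Real.exp_add]
        have : x ^ 2 / 8 + -x ^ 2 / 8 = 0 := by ring
        rw [this, Real.exp_zero, mul_one]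
  calc |x| ^ n * p x = (|x| ^ n * Real.exp (-x ^ 2 / 8)) * Real.exp (-x ^ 2 / 8) := by
        rw [hsplit]; ring
  _ ≤ (1 + (8 * n : ℝ) ^ n) * Real.exp (-x ^ 2 / 8) := by
      exact mul_le_mul_of_nonneg_right key (Real.exp_pos _).le

lemma integrable_poly_p (n : ℕ) : Integrable (fun x : ℝ => |x| ^ n * p x) := by
  refine Integrable.mono' (integrable_q8.const_mul (1 + (8 * n : ℝ) ^ n)) ?_ ?_
  · exact ((continuous_abs.pow n).mul continuous_p).aestronglyMeasurable
  · refine Eventually.of_forall fun x => ?_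
    rw [Real.norm_eq_abs,
      abs_of_nonneg (mul_nonneg (pow_nonneg (abs_nonneg x) n) (p_nonneg x))]
    exact poly_p_le n x

lemma tendsto_exp8 : Tendsto (fun x : ℝ => Real.exp (-x ^ 2 / 8)) atTop (nhds 0) := by
  apply Real.tendsto_exp_atBot.comp
  have h1 : Tendsto (fun x : ℝ => x ^ 2 / 8) atTop atTop :=
    (tendsto_pow_atTop (by norm_num)).atTop_div_const (by norm_num)
  have := tendsto_neg_atTop_atBot.comp h1
  refine this.congr fun x => ?_
  simp [neg_div]

lemma tendsto_poly_p_atTop (n : ℕ) : Tendsto (fun x : ℝ => |x| ^ n * p x) atTop (nhds 0) := by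
  have hb : Tendsto (fun x : ℝ => (1 + (8 * n : ℝ) ^ n) * Real.exp (-x ^ 2 / 8)) atTop (nhds 0) := by
    have := tendsto_exp8.const_mul (1 + (8 * n : ℝ) ^ n)
    simpa using this
  exact squeeze_zero (fun x => mul_nonneg (pow_nonneg (abs_nonneg x) n) (p_nonneg x))
    (fun x => poly_p_le n x) hb

lemma tendsto_poly_p_atBot (n : ℕ) : Tendsto (fun x : ℝ => |x| ^ n * p x) atBot (nhds 0) := by
  have h := (tendsto_poly_p_atTop n).comp tendsto_abs_atBot_atTop
  refine h.congr fun x => ?_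
  simp only [Function.comp_apply, abs_abs, p, sq_abs]

lemma integral_deriv_eq_zero (f f' : ℝ → ℝ) (hd : ∀ x, HasDerivAt f (f' x) x)
    (hi : Integrable f') (ht : Tendsto f atTop (nhds 0)) (hb : Tendsto f atBot (nhds 0)) :
    ∫ x, f' x = 0 := by
  have h1 : ∫ x in Iic (0:ℝ), f' x = f 0 - 0 :=
    integral_Iic_of_hasDerivAt_of_tendsto' (fun x _ => hd x) hi.integrableOn hb
  have h2 : ∫ x in Ioi (0:ℝ), f' x = 0 - f 0 :=
    integral_Ioi_of_hasDerivAt_of_tendsto' (fun x _ => hd x) hi.integrableOn ht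
  have h3 := integral_add_compl (measurableSet_Iic : MeasurableSet (Iic (0:ℝ))) hi
  rw [compl_Iic] at h3
  linarith

lemma tendsto_p_atTop : Tendsto p atTop (nhds 0) := by
  have := tendsto_poly_p_atTop 0
  simpa using this

lemma tendsto_p_atBot : Tendsto p atBot (nhds 0) := by
  have := tendsto_poly_p_atBot 0
  simpa using this

lemma integrable_xp : Integrable (fun x : ℝ => x * p x) := by
  refine Integrable.mono' (integrable_poly_p 1) ?_ ?_
  · exact (continuous_id.mul continuous_p).aestronglyMeasurable
  · refine Eventually.of_forall fun x => ?_
    rw [Real.norm_eq_abs, abs_mul, abs_of_nonneg (p_nonneg x), pow_one]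

lemma integral_xp : ∫ x, x * p x = 0 := by
  refine integral_deriv_eq_zero (fun x => -2 * p x) _ (fun x => ?_) integrable_xp ?_ ?_
  · have := (hasDerivAt_p x).const_mul (-2 : ℝ)
    refine this.congr_deriv ?_
    ring
  · have := tendsto_p_atTop.const_mul (-2 : ℝ)
    simpa using this
  · have := tendsto_p_atBot.const_mul (-2 : ℝ)
    simpa using this

/-- Mass of the 1D Gaussian. -/
def m : ℝ := ∫ x, p x

lemma m_pos : 0 < m := by
  rw [m]
  apply (integral_pos_iff_support_of_nonneg_ae
    (Eventually.of_forall fun x => p_nonneg x) integrable_p).mpr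
  have : Function.support p = univ := by
    ext x; simp [Function.support, (p_pos x).ne']
  rw [this]
  simp

end FP

open Real MeasureTheory Filter Set

namespace FP

/-- 2D Gaussian weight. -/
def ρ (η : ℝ × ℝ) : ℝ := p η.1 * p η.2

lemma ρ_eq (η : ℝ × ℝ) : ρ η = Real.exp (-(η.1 ^ 2 + η.2 ^ 2) / 4) := by
  rw [ρ, p, p, ← Real.exp_add]; ring_nf

lemma ρ_pos (η : ℝ × ℝ) : 0 < ρ η := mul_pos (p_pos _) (p_pos _)
lemma ρ_nonneg (η : ℝ × ℝ) : 0 ≤ ρ η := (ρ_pos η).le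

lemma continuous_ρ : Continuous ρ :=
  (continuous_p.comp continuous_fst).mul (continuous_p.comp continuous_snd)

lemma integrable_pw2 : Integrable (fun x : ℝ => (1 + x ^ 2) ^ 2 * p x) := by
  refine Integrable.mono'
    (((integrable_poly_p 4).add ((integrable_poly_p 2).const_mul 2)).add integrable_p)
    (((continuous_const.add (continuous_pow 2)).pow 2).mul continuous_p).aestronglyMeasurable
    (Eventually.of_forall fun x => ?_)
  have h4 : |x| ^ 4 = x ^ 4 := by
    rw [pow_abs, abs_of_nonneg (by positivity : (0:ℝ) ≤ x ^ 4)]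
  have h2 : |x| ^ 2 = x ^ 2 := sq_abs x
  have hnn : (0:ℝ) ≤ (1 + x ^ 2) ^ 2 * p x :=
    mul_nonneg (by positivity) (p_nonneg x)
  rw [Real.norm_eq_abs, abs_of_nonneg hnn]
  show (1 + x ^ 2) ^ 2 * p x ≤ |x| ^ 4 * p x + 2 * (|x| ^ 2 * p x) + p x
  rw [h4, h2]
  have : (1 + x ^ 2) ^ 2 * p x = x ^ 4 * p x + 2 * (x ^ 2 * p x) + p x := by ring
  linarith

lemma integrable_dom {F : ℝ × ℝ → ℝ} (hF : Continuous F) (C : ℝ)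
    (hbd : ∀ η : ℝ × ℝ, |F η| ≤ C * ((1 + η.1 ^ 2) ^ 2 * (1 + η.2 ^ 2) ^ 2)) :
    Integrable (fun η : ℝ × ℝ => F η * ρ η) := by
  have hprod : Integrable (fun z : ℝ × ℝ =>
      (C * ((1 + z.1 ^ 2) ^ 2 * p z.1)) * ((1 + z.2 ^ 2) ^ 2 * p z.2)) := by
    rw [MeasureTheory.Measure.volume_eq_prod]
    exact (integrable_pw2.const_mul C).mul_prod integrable_pw2
  refine hprod.mono' ((hF.mul continuous_ρ).aestronglyMeasurable)
    (Eventually.of_forall fun η => ?_)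
  rw [Real.norm_eq_abs, abs_mul, abs_of_nonneg (ρ_nonneg η)]
  calc |F η| * ρ η ≤ (C * ((1 + η.1 ^ 2) ^ 2 * (1 + η.2 ^ 2) ^ 2)) * ρ η :=
        mul_le_mul_of_nonneg_right (hbd η) (ρ_nonneg η)
  _ = _ := by rw [ρ]; ring

lemma integrable_dom1 {f : ℝ → ℝ} (hf : Continuous f) (C : ℝ)
    (h : ∀ x, |f x| ≤ C * ((1 + x ^ 2) ^ 2 * p x)) : Integrable f := by
  refine (integrable_pw2.const_mul C).mono' hf.aestronglyMeasurable
    (Eventually.of_forall fun x => ?_)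
  rw [Real.norm_eq_abs]
  exact h x

lemma abs_sub_le'' (a b : ℝ) : |a - b| ≤ |a| + |b| := by
  rw [sub_eq_add_neg]
  exact (abs_add_le _ _).trans (by rw [abs_neg])

lemma tendsto_one_add_sq_p_atTop : Tendsto (fun s : ℝ => (1 + s ^ 2) * p s) atTop (nhds 0) := by
  have h := (tendsto_poly_p_atTop 0).add (tendsto_poly_p_atTop 2)
  rw [add_zero] at h
  refine h.congr fun s => ?_
  rw [pow_zero, one_mul, sq_abs]; ring

lemma tendsto_one_add_sq_p_atBot : Tendsto (fun s : ℝ => (1 + s ^ 2) * p s) atBot (nhds 0) := by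
  have h := (tendsto_poly_p_atBot 0).add (tendsto_poly_p_atBot 2)
  rw [add_zero] at h
  refine h.congr fun s => ?_
  rw [pow_zero, one_mul, sq_abs]; ring

lemma schwartz_bound (U : SchwartzMap (ℝ × ℝ) ℝ) : ∃ C : ℝ, 0 ≤ C ∧ ∀ η, |U η| ≤ C := by
  obtain ⟨C, hC, h⟩ := U.decay 0 0
  refine ⟨C, hC.le, fun η => ?_⟩
  have := h η
  simpa [norm_iteratedFDeriv_zero] using this

/-- Partial derivative in the first variable, as a Schwartz map. -/
def Dx (U : SchwartzMap (ℝ × ℝ) ℝ) : SchwartzMap (ℝ × ℝ) ℝ :=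
  LineDeriv.lineDerivOpCLM ℝ (SchwartzMap (ℝ × ℝ) ℝ) ((1 : ℝ), (0 : ℝ)) U

/-- Partial derivative in the second variable, as a Schwartz map. -/
def Dy (U : SchwartzMap (ℝ × ℝ) ℝ) : SchwartzMap (ℝ × ℝ) ℝ :=
  LineDeriv.lineDerivOpCLM ℝ (SchwartzMap (ℝ × ℝ) ℝ) ((0 : ℝ), (1 : ℝ)) U

lemma hasDerivAt_sect1 (U : SchwartzMap (ℝ × ℝ) ℝ) (x y : ℝ) :
    HasDerivAt (fun s => U (s, y)) (Dx U (x, y)) x := by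
  have hU : HasFDerivAt U (fderiv ℝ U (x, y)) (x, y) :=
    (U.differentiable.differentiableAt).hasFDerivAt
  have hline : HasDerivAt (fun s : ℝ => (s, y)) ((1 : ℝ), (0 : ℝ)) x :=
    (hasDerivAt_id x).prodMk (hasDerivAt_const x y)
  have h := hU.comp_hasDerivAt x hline
  rw [Dx, LineDeriv.lineDerivOpCLM_apply, SchwartzMap.lineDerivOp_apply_eq_fderiv]
  exact h

lemma hasDerivAt_sect2 (U : SchwartzMap (ℝ × ℝ) ℝ) (x y : ℝ) :
    HasDerivAt (fun t => U (x, t)) (Dy U (x, y)) y := by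
  have hU : HasFDerivAt U (fderiv ℝ U (x, y)) (x, y) :=
    (U.differentiable.differentiableAt).hasFDerivAt
  have hline : HasDerivAt (fun t : ℝ => (x, t)) ((0 : ℝ), (1 : ℝ)) y :=
    (hasDerivAt_const y x).prodMk (hasDerivAt_id y)
  have h := hU.comp_hasDerivAt y hline
  rw [Dy, LineDeriv.lineDerivOpCLM_apply, SchwartzMap.lineDerivOp_apply_eq_fderiv]
  exact h

/-- 2D integration by parts in the first variable. -/
lemma ibp1 (F F' : ℝ × ℝ → ℝ)
    (hd : ∀ η : ℝ × ℝ, HasDerivAt (fun s => F (s, η.2)) (F' η) η.1)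
    (hF' : Integrable F')
    (hsec : ∀ y : ℝ, Integrable fun s => F' (s, y))
    (ht : ∀ y : ℝ, Tendsto (fun s => F (s, y)) atTop (nhds 0))
    (hb : ∀ y : ℝ, Tendsto (fun s => F (s, y)) atBot (nhds 0)) :
    ∫ η, F' η = 0 := by
  have hint : Integrable F' ((volume : Measure ℝ).prod volume) := by
    rwa [← MeasureTheory.Measure.volume_eq_prod]
  have key : ∀ y : ℝ, ∫ x, F' (x, y) = 0 := fun y =>
    integral_deriv_eq_zero (fun s => F (s, y)) (fun s => F' (s, y))
      (fun s => hd (s, y)) (hsec y) (ht y) (hb y)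
  calc ∫ η, F' η = ∫ η, F' η ∂((volume : Measure ℝ).prod volume) := by
        rw [← MeasureTheory.Measure.volume_eq_prod]
  _ = ∫ y, ∫ x, F' (x, y) := MeasureTheory.integral_prod_symm F' hint
  _ = 0 := by simp [key]

/-- 2D integration by parts in the second variable. -/
lemma ibp2 (F F' : ℝ × ℝ → ℝ)
    (hd : ∀ η : ℝ × ℝ, HasDerivAt (fun t => F (η.1, t)) (F' η) η.2)
    (hF' : Integrable F')
    (hsec : ∀ x : ℝ, Integrable fun t => F' (x, t))
    (ht : ∀ x : ℝ, Tendsto (fun t => F (x, t)) atTop (nhds 0))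
    (hb : ∀ x : ℝ, Tendsto (fun t => F (x, t)) atBot (nhds 0)) :
    ∫ η, F' η = 0 := by
  have hint : Integrable F' ((volume : Measure ℝ).prod volume) := by
    rwa [← MeasureTheory.Measure.volume_eq_prod]
  have key : ∀ x : ℝ, ∫ t, F' (x, t) = 0 := fun x =>
    integral_deriv_eq_zero (fun t => F (x, t)) (fun t => F' (x, t))
      (fun t => hd (x, t)) (hsec x) (ht x) (hb x)
  calc ∫ η, F' η = ∫ η, F' η ∂((volume : Measure ℝ).prod volume) := by
        rw [← MeasureTheory.Measure.volume_eq_prod]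
  _ = ∫ x, ∫ t, F' (x, t) := MeasureTheory.integral_prod F' hint
  _ = 0 := by simp [key]

end FP

namespace FP

lemma m_def : (∫ x, p x) = m := rfl

lemma integrable_poly2_p {f : ℝ → ℝ} (hf : Continuous f) (c : ℝ)
    (hfb : ∀ x, |f x| ≤ c * (1 + x ^ 2)) : Integrable (fun x => f x * p x) := by
  have hc0 : 0 ≤ c := by
    have := (abs_nonneg (f 0)).trans (hfb 0)
    nlinarith
  apply integrable_dom1 (hf.mul continuous_p) c
  intro x
  show |f x * p x| ≤ c * ((1 + x ^ 2) ^ 2 * p x)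
  rw [abs_mul, abs_of_nonneg (p_nonneg x)]
  have h1 : (1 + x ^ 2) ≤ (1 + x ^ 2) ^ 2 := by nlinarith [sq_nonneg x, sq_nonneg (x^2)]
  calc |f x| * p x ≤ (c * (1 + x ^ 2)) * p x :=
        mul_le_mul_of_nonneg_right (hfb x) (p_nonneg x)
  _ ≤ c * ((1 + x ^ 2) ^ 2 * p x) := by
      rw [mul_assoc]
      refine mul_le_mul_of_nonneg_left ?_ hc0
      exact mul_le_mul_of_nonneg_right h1 (p_nonneg x)

lemma integrable_bdd_p {f : ℝ → ℝ} (hf : Continuous f) (c : ℝ)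
    (hfb : ∀ x, |f x| ≤ c) : Integrable (fun x => f x * p x) := by
  apply integrable_poly2_p hf c
  intro x
  have hc0 : 0 ≤ c := (abs_nonneg (f 0)).trans (hfb 0)
  nlinarith [hfb x, sq_nonneg x]

/-- Weighted Cauchy–Schwarz: `(∫ f p)² ≤ m ∫ f² p`. -/
lemma csw {f : ℝ → ℝ} (hf : Continuous f) (c : ℝ) (hfb : ∀ x, |f x| ≤ c) :
    (∫ x, f x * p x) ^ 2 ≤ m * ∫ x, (f x) ^ 2 * p x := by
  have hc0 : 0 ≤ c := (abs_nonneg (f 0)).trans (hfb 0)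
  set IH := ∫ x, f x * p x with hIH
  set IH2 := ∫ x, (f x) ^ 2 * p x with hIH2
  have int1 : Integrable (fun x => f x * p x) := integrable_bdd_p hf c hfb
  have int2 : Integrable (fun x => (f x) ^ 2 * p x) := by
    refine integrable_bdd_p (hf.pow 2) (c ^ 2) fun x => ?_
    rw [abs_pow]
    exact pow_le_pow_left₀ (abs_nonneg _) (hfb x) 2
  set k := IH / m with hk
  have hexp : 0 ≤ ∫ x, (f x - k) ^ 2 * p x :=
    integral_nonneg fun x => mul_nonneg (sq_nonneg _) (p_nonneg x)
  have e : ∀ x, (f x - k) ^ 2 * p x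
      = (f x) ^ 2 * p x - (2 * k) * (f x * p x) + k ^ 2 * p x := fun x => by ring
  have hval : ∫ x, (f x - k) ^ 2 * p x = IH2 - 2 * k * IH + k ^ 2 * m := by
    simp_rw [e]
    have i1 : Integrable (fun x => (f x) ^ 2 * p x - 2 * k * (f x * p x)) :=
      int2.sub (int1.const_mul (2 * k))
    have i2 : Integrable (fun x => k ^ 2 * p x) := integrable_p.const_mul (k ^ 2)
    rw [integral_add i1 i2, integral_sub int2 (int1.const_mul (2 * k)),
      integral_const_mul, integral_const_mul, m_def]
    try ring
  rw [hval] at hexp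
  have hm := m_pos
  have e2 : k ^ 2 * m = IH ^ 2 / m := by
    rw [hk]; field_simp
  have e3 : 2 * k * IH = 2 * IH ^ 2 / m := by
    rw [hk]; field_simp
  rw [e2, e3] at hexp
  have : IH ^ 2 / m ≤ IH2 := by
    have : 2 * IH ^ 2 / m - IH ^ 2 / m = IH ^ 2 / m := by ring
    linarith
  calc IH ^ 2 = (IH ^ 2 / m) * m := by field_simp
  _ ≤ IH2 * m := mul_le_mul_of_nonneg_right this hm.le
  _ = m * IH2 := by ring

/-- Sharp 1D Gaussian Poincaré inequality (unnormalized):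
`m ∫ h² p − (∫ h p)² ≤ 2 m ∫ h'² p`. -/
lemma poincare1D {h h' : ℝ → ℝ} (hd : ∀ x, HasDerivAt h (h' x) x) (hc' : Continuous h')
    (A B : ℝ) (hA : ∀ x, |h x| ≤ A) (hB : ∀ x, |h' x| ≤ B) :
    m * (∫ x, (h x) ^ 2 * p x)
      ≤ (∫ x, h x * p x) ^ 2 + 2 * m * ∫ x, (h' x) ^ 2 * p x := by
  have hch : Continuous h := by
    rw [continuous_iff_continuousAt]; exact fun x => (hd x).continuousAt
  have hA0 : 0 ≤ A := (abs_nonneg (h 0)).trans (hA 0)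
  have hB0 : 0 ≤ B := (abs_nonneg (h' 0)).trans (hB 0)
  have hc'2 : Continuous fun t => (h' t) ^ 2 := hc'.pow 2
  -- the antiderivative of h'^2
  set H : ℝ → ℝ := fun x => ∫ t in (0:ℝ)..x, (h' t) ^ 2 with hHdef
  have hH' : ∀ x, HasDerivAt H ((h' x) ^ 2) x := by
    intro x
    exact intervalIntegral.integral_hasDerivAt_right
      (hc'2.intervalIntegrable 0 x)
      (hc'2.stronglyMeasurableAtFilter volume (nhds x))
      hc'2.continuousAt
  have hcH : Continuous H := by
    rw [continuous_iff_continuousAt]; exact fun x => (hH' x).continuousAt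
  have hHb : ∀ x, |H x| ≤ B ^ 2 * |x| := by
    intro x
    have := intervalIntegral.norm_integral_le_of_norm_le_const
      (C := B ^ 2) (f := fun t => (h' t) ^ 2) (a := 0) (b := x) ?_
    · rw [Real.norm_eq_abs] at this
      simpa using this
    · intro t _
      rw [Real.norm_eq_abs, abs_pow]
      exact pow_le_pow_left₀ (abs_nonneg _) (hB t) 2
  -- key pointwise inequality
  have key : ∀ a b : ℝ, (h a - h b) ^ 2 ≤ (a - b) * (H a - H b) := by
    have core : ∀ a b : ℝ, b ≤ a → (h a - h b) ^ 2 ≤ (a - b) * (H a - H b) := by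
      intro a b hba
      have hfd : h a - h b = ∫ t in b..a, h' t := by
        rw [intervalIntegral.integral_eq_sub_of_hasDerivAt (fun t _ => hd t)
          (hc'.intervalIntegrable b a)]
      have hHd : H a - H b = ∫ t in b..a, (h' t) ^ 2 :=
        intervalIntegral.integral_interval_sub_left
          (hc'2.intervalIntegrable 0 a) (hc'2.intervalIntegrable 0 b)
      rcases eq_or_lt_of_le hba with rfl | hlt
      · simp
      · have hab : 0 < a - b := by linarith
        set d := ∫ t in Ioc b a, h' t with hdd
        set e := ∫ t in Ioc b a, (h' t) ^ 2 with hee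
        set k := d / (a - b) with hkk
        have hIoc1 : IntegrableOn h' (Ioc b a) := hc'.integrableOn_Ioc
        have hIoc2 : IntegrableOn (fun t => (h' t) ^ 2) (Ioc b a) := hc'2.integrableOn_Ioc
        have hexp : 0 ≤ ∫ t in Ioc b a, (h' t - k) ^ 2 := integral_nonneg fun t => by positivity
        have hval : ∫ t in Ioc b a, (h' t - k) ^ 2 = e - 2 * k * d + k ^ 2 * (a - b) := by
          have e1 : ∀ t, (h' t - k) ^ 2 = (h' t) ^ 2 - (2 * k) * (h' t) + k ^ 2 := fun t => by ring
          simp_rw [e1]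
          have i1 : Integrable (fun t => (h' t) ^ 2 - 2 * k * h' t) (volume.restrict (Ioc b a)) :=
            hIoc2.sub (hIoc1.const_mul (2 * k))
          have i2 : Integrable (fun _ : ℝ => k ^ 2) (volume.restrict (Ioc b a)) :=
            (integrableOn_const_iff).mpr (Or.inr (by rw [Real.volume_Ioc]; exact ENNReal.ofReal_lt_top))
          rw [integral_add i1 i2, integral_sub hIoc2 (hIoc1.const_mul (2 * k)), integral_const_mul]
          rw [setIntegral_const, measureReal_def, Real.volume_Ioc, ENNReal.toReal_ofReal hab.le]
          simp only [smul_eq_mul]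
          ring
        have hcs : d ^ 2 ≤ (a - b) * e := by
          rw [hval] at hexp
          have e2 : k ^ 2 * (a - b) = d ^ 2 / (a - b) := by
            rw [hkk]; field_simp
          have e3 : 2 * k * d = 2 * d ^ 2 / (a - b) := by
            rw [hkk]; field_simp
          rw [e2, e3] at hexp
          have h4 : d ^ 2 / (a - b) ≤ e := by
            have : 2 * d ^ 2 / (a - b) - d ^ 2 / (a - b) = d ^ 2 / (a - b) := by ring
            linarith
          calc d ^ 2 = (d ^ 2 / (a - b)) * (a - b) := by field_simp
          _ ≤ e * (a - b) := mul_le_mul_of_nonneg_right h4 hab.le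
          _ = (a - b) * e := by ring
        rw [hfd, hHd, intervalIntegral.integral_of_le hba, intervalIntegral.integral_of_le hba]
        exact hcs
    intro a b
    rcases le_total b a with hba | hab
    · exact core a b hba
    · have := core b a hab
      have e1 : (h a - h b) ^ 2 = (h b - h a) ^ 2 := by ring
      have e2 : (a - b) * (H a - H b) = (b - a) * (H b - H a) := by ring
      rw [e1, e2]
      exact this
  -- basic integrabilities
  have int_p : Integrable p := integrable_p
  have int_hp : Integrable (fun x => h x * p x) := integrable_bdd_p hch A hA
  have int_h2p : Integrable (fun x => (h x) ^ 2 * p x) := by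
    refine integrable_bdd_p (hch.pow 2) (A ^ 2) fun x => ?_
    rw [abs_pow]; exact pow_le_pow_left₀ (abs_nonneg _) (hA x) 2
  have int_e2p : Integrable (fun x => (h' x) ^ 2 * p x) := by
    refine integrable_bdd_p (hc'.pow 2) (B ^ 2) fun x => ?_
    rw [abs_pow]; exact pow_le_pow_left₀ (abs_nonneg _) (hB x) 2
  have int_xp : Integrable (fun x => x * p x) := integrable_xp
  have int_Hp : Integrable (fun x => H x * p x) := by
    refine integrable_poly2_p hcH (B ^ 2) fun x => ?_
    calc |H x| ≤ B ^ 2 * |x| := hHb x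
    _ ≤ B ^ 2 * (1 + x ^ 2) := by
        refine mul_le_mul_of_nonneg_left ?_ (by positivity)
        nlinarith [sq_nonneg (|x| - 1), sq_abs x, abs_nonneg x]
  have int_xHp : Integrable (fun x => x * H x * p x) := by
    refine integrable_poly2_p (continuous_id.mul hcH) (B ^ 2) fun x => ?_
    rw [abs_mul]
    calc |x| * |H x| ≤ |x| * (B ^ 2 * |x|) :=
          mul_le_mul_of_nonneg_left (hHb x) (abs_nonneg x)
    _ = B ^ 2 * (|x| * |x|) := by ring
    _ ≤ B ^ 2 * (1 + x ^ 2) := by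
        refine mul_le_mul_of_nonneg_left ?_ (by positivity)
        nlinarith [sq_abs x, abs_nonneg x]
  -- names for the integrals
  set IH := ∫ x, h x * p x with hIH
  set IH2 := ∫ x, (h x) ^ 2 * p x with hIH2
  set IE := ∫ x, (h' x) ^ 2 * p x with hIE
  set β := ∫ x, H x * p x with hβ
  set δ := ∫ x, x * H x * p x with hδ
  have hα : ∫ x, x * p x = 0 := integral_xp
  -- inner expansions
  have innerL : ∀ a : ℝ, ∫ b, (h a - h b) ^ 2 * p b = (h a) ^ 2 * m - 2 * h a * IH + IH2 := by
    intro a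
    have e1 : ∀ b, (h a - h b) ^ 2 * p b
        = (h a) ^ 2 * p b - (2 * h a) * (h b * p b) + (h b) ^ 2 * p b := fun b => by ring
    simp_rw [e1]
    have i1 : Integrable (fun b => (h a) ^ 2 * p b - 2 * h a * (h b * p b)) :=
      (int_p.const_mul ((h a) ^ 2)).sub (int_hp.const_mul (2 * h a))
    rw [integral_add i1 int_h2p,
      integral_sub (int_p.const_mul ((h a) ^ 2)) (int_hp.const_mul (2 * h a)),
      integral_const_mul, integral_const_mul, m_def]
    try ring
  have innerR : ∀ a : ℝ, ∫ b, ((a - b) * (H a - H b)) * p b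
      = a * H a * m - a * β + δ := by
    intro a
    have e1 : ∀ b, ((a - b) * (H a - H b)) * p b
        = (a * H a) * p b - a * (H b * p b) - (H a) * (b * p b) + b * H b * p b := fun b => by ring
    simp_rw [e1]
    have i0 : Integrable (fun b => a * H a * p b - a * (H b * p b)) :=
      (int_p.const_mul (a * H a)).sub (int_Hp.const_mul a)
    have i1 : Integrable (fun b => a * H a * p b - a * (H b * p b) - H a * (b * p b)) :=
      i0.sub (int_xp.const_mul (H a))
    rw [integral_add i1 int_xHp, integral_sub i0 (int_xp.const_mul (H a)),
      integral_sub (int_p.const_mul (a * H a)) (int_Hp.const_mul a),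
      integral_const_mul, integral_const_mul, integral_const_mul, m_def, hα]
    try ring
  -- middle inequality, pointwise in a
  have middle : ∀ a : ℝ, (h a) ^ 2 * m - 2 * h a * IH + IH2 ≤ a * H a * m - a * β + δ := by
    intro a
    rw [← innerL a, ← innerR a]
    refine integral_mono ?_ ?_ ?_
    · refine integrable_bdd_p (((continuous_const.sub hch).pow 2)) ((2 * A) ^ 2) fun b => ?_
      rw [abs_pow]
      refine pow_le_pow_left₀ (abs_nonneg _) ?_ 2
      calc |h a - h b| ≤ |h a| + |h b| := abs_sub_le'' _ _
      _ ≤ A + A := add_le_add (hA a) (hA b)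
      _ = 2 * A := by ring
    · refine integrable_poly2_p
        ((continuous_const.sub continuous_id).mul (continuous_const.sub hcH))
        (2 * B ^ 2 * (1 + a ^ 2)) fun b => ?_
      rw [abs_mul]
      have h1 : |a - b| ≤ |a| + |b| := abs_sub_le'' _ _
      have h2 : |H a - H b| ≤ B ^ 2 * |a| + B ^ 2 * |b| :=
        (abs_sub_le'' _ _).trans (add_le_add (hHb a) (hHb b))
      have hsq : (|a| + |b|) ^ 2 ≤ 2 * ((1 + a ^ 2) * (1 + b ^ 2)) := by
        nlinarith [sq_abs a, sq_abs b, abs_nonneg a, abs_nonneg b,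
          sq_nonneg (|a| - |b|), mul_nonneg (abs_nonneg a) (abs_nonneg b),
          sq_nonneg (|a| * |b|)]
      calc |a - b| * |H a - H b| ≤ (|a| + |b|) * (B ^ 2 * |a| + B ^ 2 * |b|) := by
            exact mul_le_mul h1 h2 (abs_nonneg _) (by positivity)
      _ = B ^ 2 * (|a| + |b|) ^ 2 := by ring
      _ ≤ B ^ 2 * (2 * ((1 + a ^ 2) * (1 + b ^ 2))) :=
          mul_le_mul_of_nonneg_left hsq (sq_nonneg B)
      _ = 2 * B ^ 2 * (1 + a ^ 2) * (1 + b ^ 2) := by ring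
    · intro b
      exact mul_le_mul_of_nonneg_right (key a b) (p_nonneg b)
  -- outer integrals
  have outerL : ∫ a, ((h a) ^ 2 * m - 2 * h a * IH + IH2) * p a
      = 2 * m * IH2 - 2 * IH ^ 2 := by
    have e1 : ∀ a, ((h a) ^ 2 * m - 2 * h a * IH + IH2) * p a
        = m * ((h a) ^ 2 * p a) - (2 * IH) * (h a * p a) + IH2 * p a := fun a => by ring
    simp_rw [e1]
    have i1 : Integrable (fun a => m * ((h a) ^ 2 * p a) - 2 * IH * (h a * p a)) :=
      (int_h2p.const_mul m).sub (int_hp.const_mul (2 * IH))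
    rw [integral_add i1 (int_p.const_mul IH2),
      integral_sub (int_h2p.const_mul m) (int_hp.const_mul (2 * IH)),
      integral_const_mul, integral_const_mul, integral_const_mul, m_def]
    try ring
  have outerR : ∫ a, (a * H a * m - a * β + δ) * p a = 2 * m * δ := by
    have e1 : ∀ a, (a * H a * m - a * β + δ) * p a
        = m * (a * H a * p a) - β * (a * p a) + δ * p a := fun a => by ring
    simp_rw [e1]
    have i1 : Integrable (fun a => m * (a * H a * p a) - β * (a * p a)) :=
      (int_xHp.const_mul m).sub (int_xp.const_mul β)
    rw [integral_add i1 (int_p.const_mul δ),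
      integral_sub (int_xHp.const_mul m) (int_xp.const_mul β),
      integral_const_mul, integral_const_mul, integral_const_mul, m_def, hα]
    try ring
  have big : 2 * m * IH2 - 2 * IH ^ 2 ≤ 2 * m * δ := by
    rw [← outerL, ← outerR]
    refine integral_mono ?_ ?_ ?_
    · refine integrable_poly2_p
        ((((hch.pow 2).mul continuous_const).sub
          ((continuous_const.mul hch).mul continuous_const)).add continuous_const)
        (m * A ^ 2 + 2 * |IH| * A + |IH2|) fun a => ?_
      have h1 : |(h a) ^ 2 * m - 2 * h a * IH + IH2|
          ≤ A ^ 2 * m + 2 * A * |IH| + |IH2| := by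
        have t1 : |(h a) ^ 2 * m| ≤ A ^ 2 * m := by
          rw [abs_mul, abs_of_nonneg m_pos.le, abs_pow]
          refine mul_le_mul_of_nonneg_right ?_ m_pos.le
          exact pow_le_pow_left₀ (abs_nonneg _) (hA a) 2
        have t2 : |2 * h a * IH| ≤ 2 * A * |IH| := by
          rw [abs_mul, abs_mul]
          simp only [abs_two]
          refine mul_le_mul_of_nonneg_right ?_ (abs_nonneg IH)
          nlinarith [hA a, abs_nonneg (h a)]
        calc |(h a) ^ 2 * m - 2 * h a * IH + IH2|
            ≤ |(h a) ^ 2 * m - 2 * h a * IH| + |IH2| := abs_add_le _ _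
        _ ≤ |(h a) ^ 2 * m| + |2 * h a * IH| + |IH2| := by
            linarith [abs_sub_le'' ((h a) ^ 2 * m) (2 * h a * IH)]
        _ ≤ A ^ 2 * m + 2 * A * |IH| + |IH2| := by linarith
      calc |(h a) ^ 2 * m - 2 * h a * IH + IH2| ≤ A ^ 2 * m + 2 * A * |IH| + |IH2| := h1
      _ = m * A ^ 2 + 2 * |IH| * A + |IH2| := by ring
      _ ≤ (m * A ^ 2 + 2 * |IH| * A + |IH2|) * (1 + a ^ 2) := by
          have hc : 0 ≤ m * A ^ 2 + 2 * |IH| * A + |IH2| := by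
            have := m_pos.le
            have := abs_nonneg IH
            have := abs_nonneg IH2
            positivity
          exact le_mul_of_one_le_right hc (by nlinarith [sq_nonneg a])
    · refine integrable_poly2_p
        ((((continuous_id.mul hcH).mul continuous_const).sub
          (continuous_id.mul continuous_const)).add continuous_const)
        (m * B ^ 2 + |β| + |δ|) fun a => ?_
      have t1 : |a * H a * m| ≤ m * B ^ 2 * a ^ 2 := by
        rw [abs_mul, abs_mul, abs_of_nonneg m_pos.le]
        calc |a| * |H a| * m ≤ |a| * (B ^ 2 * |a|) * m := by
              refine mul_le_mul_of_nonneg_right ?_ m_pos.le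
              exact mul_le_mul_of_nonneg_left (hHb a) (abs_nonneg a)
        _ = m * B ^ 2 * (|a| * |a|) := by ring
        _ = m * B ^ 2 * a ^ 2 := by rw [abs_mul_abs_self]; ring
      have t2 : |a * β| ≤ |β| * (1 + a ^ 2) := by
        rw [abs_mul]
        calc |a| * |β| ≤ (1 + a ^ 2) * |β| := by
              refine mul_le_mul_of_nonneg_right ?_ (abs_nonneg β)
              nlinarith [sq_nonneg (|a| - 1), sq_abs a, abs_nonneg a]
        _ = |β| * (1 + a ^ 2) := by ring
      calc |a * H a * m - a * β + δ| ≤ |a * H a * m - a * β| + |δ| := abs_add_le _ _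
      _ ≤ |a * H a * m| + |a * β| + |δ| := by
          linarith [abs_sub_le'' (a * H a * m) (a * β)]
      _ ≤ m * B ^ 2 * a ^ 2 + |β| * (1 + a ^ 2) + |δ| := by linarith
      _ ≤ (m * B ^ 2 + |β| + |δ|) * (1 + a ^ 2) := by
          have h1 : 0 ≤ m * B ^ 2 := mul_nonneg m_pos.le (sq_nonneg B)
          have h2 : 0 ≤ |β| := abs_nonneg β
          have h3 : 0 ≤ |δ| := abs_nonneg δ
          nlinarith [sq_nonneg a, mul_nonneg h3 (sq_nonneg a)]
    · intro a
      exact mul_le_mul_of_nonneg_right (middle a) (p_nonneg a)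
  -- the integration by parts identity δ = 2 IE
  have hδ2 : δ = 2 * IE := by
    have hin : Integrable (fun x => x * H x * p x - 2 * ((h' x) ^ 2 * p x)) :=
      int_xHp.sub (int_e2p.const_mul 2)
    have hzero : ∫ x, (x * H x * p x - 2 * ((h' x) ^ 2 * p x)) = 0 := by
      refine integral_deriv_eq_zero (fun x => -2 * (H x * p x)) _ (fun x => ?_) hin ?_ ?_
      · have h1 := ((hH' x).mul (hasDerivAt_p x)).const_mul (-2 : ℝ)
        refine h1.congr_deriv ?_
        ring
      · refine squeeze_zero_norm (a := fun x => 2 * B ^ 2 * (|x| ^ 1 * p x)) (fun x => ?_) ?_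
        · show ‖-2 * (H x * p x)‖ ≤ 2 * B ^ 2 * (|x| ^ 1 * p x)
          rw [Real.norm_eq_abs, abs_mul, abs_mul, abs_of_nonneg (p_nonneg x)]
          simp only [pow_one]
          calc |(-2:ℝ)| * (|H x| * p x) ≤ 2 * ((B ^ 2 * |x|) * p x) := by
                rw [abs_neg, abs_two]
                exact mul_le_mul_of_nonneg_left
                  (mul_le_mul_of_nonneg_right (hHb x) (p_nonneg x)) (by norm_num)
          _ = 2 * B ^ 2 * (|x| * p x) := by ring
        · have := (tendsto_poly_p_atTop 1).const_mul (2 * B ^ 2)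
          simpa using this
      · refine squeeze_zero_norm (a := fun x => 2 * B ^ 2 * (|x| ^ 1 * p x)) (fun x => ?_) ?_
        · show ‖-2 * (H x * p x)‖ ≤ 2 * B ^ 2 * (|x| ^ 1 * p x)
          rw [Real.norm_eq_abs, abs_mul, abs_mul, abs_of_nonneg (p_nonneg x)]
          simp only [pow_one]
          calc |(-2:ℝ)| * (|H x| * p x) ≤ 2 * ((B ^ 2 * |x|) * p x) := by
                rw [abs_neg, abs_two]
                exact mul_le_mul_of_nonneg_left
                  (mul_le_mul_of_nonneg_right (hHb x) (p_nonneg x)) (by norm_num)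
          _ = 2 * B ^ 2 * (|x| * p x) := by ring
        · have := (tendsto_poly_p_atBot 1).const_mul (2 * B ^ 2)
          simpa using this
    rw [integral_sub int_xHp (int_e2p.const_mul 2), integral_const_mul] at hzero
    rw [← hδ, ← hIE] at hzero
    linarith
  rw [hδ2] at big
  linarith

end FP

namespace FP

lemma one_le_quartic (a b : ℝ) : (1:ℝ) ≤ (1 + a ^ 2) ^ 2 * (1 + b ^ 2) ^ 2 := by
  have h1 : (1:ℝ) ≤ (1 + a ^ 2) ^ 2 := by nlinarith [sq_nonneg a, sq_nonneg (a ^ 2)]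
  have h2 : (1:ℝ) ≤ (1 + b ^ 2) ^ 2 := by nlinarith [sq_nonneg b, sq_nonneg (b ^ 2)]
  calc (1:ℝ) ≤ (1 + a ^ 2) ^ 2 := h1
  _ ≤ (1 + a ^ 2) ^ 2 * (1 + b ^ 2) ^ 2 := le_mul_of_one_le_right (by positivity) h2

lemma bound_const {F : ℝ × ℝ → ℝ} {c : ℝ} (h : ∀ η, |F η| ≤ c) :
    ∀ η : ℝ × ℝ, |F η| ≤ c * ((1 + η.1 ^ 2) ^ 2 * (1 + η.2 ^ 2) ^ 2) := by
  intro η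
  have hc : 0 ≤ c := (abs_nonneg _).trans (h (0, 0))
  calc |F η| ≤ c := h η
  _ ≤ c * ((1 + η.1 ^ 2) ^ 2 * (1 + η.2 ^ 2) ^ 2) :=
      le_mul_of_one_le_right hc (one_le_quartic _ _)

lemma integrable_bdd_ρ {F : ℝ × ℝ → ℝ} (hF : Continuous F) (c : ℝ) (h : ∀ η, |F η| ≤ c) :
    Integrable (fun η : ℝ × ℝ => F η * ρ η) :=
  integrable_dom hF c (bound_const h)

lemma cont_sect1 {F : ℝ × ℝ → ℝ} (hF : Continuous F) (a : ℝ) :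
    Continuous fun b => F (a, b) :=
  hF.comp (continuous_const.prodMk continuous_id)

/-- Fubini for integrals against `ρ`. -/
lemma fubini_ρ (F : ℝ × ℝ → ℝ) (hint : Integrable (fun η : ℝ × ℝ => F η * ρ η)) :
    ∫ η : ℝ × ℝ, F η * ρ η = ∫ a, (∫ b, F (a, b) * p b) * p a := by
  have h1 : ∫ η : ℝ × ℝ, F η * ρ η
      = ∫ η : ℝ × ℝ, F η * ρ η ∂((volume : Measure ℝ).prod volume) := by
    rw [← MeasureTheory.Measure.volume_eq_prod]
  have h2 : Integrable (fun η : ℝ × ℝ => F η * ρ η) ((volume : Measure ℝ).prod volume) := by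
    rwa [← MeasureTheory.Measure.volume_eq_prod]
  rw [h1, MeasureTheory.integral_prod _ h2]
  have e : (fun a => ∫ b, F (a, b) * ρ (a, b))
      = fun a => (∫ b, F (a, b) * p b) * p a := by
    funext a
    rw [← integral_mul_const]
    congr 1
    funext b
    rw [ρ]
    ring
  rw [e]

/-- Sharp 2D Gaussian Poincaré inequality for mean-zero Schwartz functions. -/
lemma poincare2D (V : SchwartzMap (ℝ × ℝ) ℝ)
    (hmean : ∫ η : ℝ × ℝ, V η * ρ η = 0) :
    (∫ η : ℝ × ℝ, (V η) ^ 2 * ρ η)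
      ≤ 2 * ∫ η : ℝ × ℝ, ((Dx V η) ^ 2 + (Dy V η) ^ 2) * ρ η := by
  obtain ⟨C0, hC00, hC0⟩ := schwartz_bound V
  obtain ⟨C1, hC10, hC1⟩ := schwartz_bound (Dx V)
  obtain ⟨C2, hC20, hC2⟩ := schwartz_bound (Dy V)
  -- integrands over ℝ²
  have intV2 : Integrable (fun η : ℝ × ℝ => (V η) ^ 2 * ρ η) := by
    refine integrable_bdd_ρ (V.continuous.pow 2) (C0 ^ 2) fun η => ?_
    rw [abs_pow]; exact pow_le_pow_left₀ (abs_nonneg _) (hC0 η) 2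
  have intD1 : Integrable (fun η : ℝ × ℝ => (Dx V η) ^ 2 * ρ η) := by
    refine integrable_bdd_ρ ((Dx V).continuous.pow 2) (C1 ^ 2) fun η => ?_
    rw [abs_pow]; exact pow_le_pow_left₀ (abs_nonneg _) (hC1 η) 2
  have intD2 : Integrable (fun η : ℝ × ℝ => (Dy V η) ^ 2 * ρ η) := by
    refine integrable_bdd_ρ ((Dy V).continuous.pow 2) (C2 ^ 2) fun η => ?_
    rw [abs_pow]; exact pow_le_pow_left₀ (abs_nonneg _) (hC2 η) 2
  have intV : Integrable (fun η : ℝ × ℝ => V η * ρ η) :=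
    integrable_bdd_ρ V.continuous C0 hC0
  -- marginal functions
  set g : ℝ → ℝ := fun a => ∫ b, V (a, b) * p b with hgdef
  set gd : ℝ → ℝ := fun a => ∫ b, Dx V (a, b) * p b with hgddef
  set Pin : ℝ → ℝ := fun a => ∫ b, (V (a, b)) ^ 2 * p b with hPindef
  set E1 : ℝ → ℝ := fun a => ∫ b, (Dx V (a, b)) ^ 2 * p b with hE1def
  set E2 : ℝ → ℝ := fun a => ∫ b, (Dy V (a, b)) ^ 2 * p b with hE2def
  -- derivative of g
  have hg' : ∀ a, HasDerivAt g (gd a) a := by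
    intro a
    have res := hasDerivAt_integral_of_dominated_loc_of_deriv_le
      (F := fun x (b : ℝ) => V (x, b) * p b) (F' := fun x (b : ℝ) => Dx V (x, b) * p b)
      (x₀ := a) (s := Metric.ball a 1) (bound := fun b => C1 * p b) (Metric.ball_mem_nhds a one_pos)
      (Eventually.of_forall fun x =>
        ((cont_sect1 V.continuous x).mul continuous_p).aestronglyMeasurable)
      (integrable_bdd_p (cont_sect1 V.continuous a) C0 fun b => hC0 (a, b))
      (((cont_sect1 (Dx V).continuous a).mul continuous_p).aestronglyMeasurable)
      (Eventually.of_forall fun b x _ => by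
        rw [Real.norm_eq_abs, abs_mul, abs_of_nonneg (p_nonneg b)]
        exact mul_le_mul_of_nonneg_right (hC1 (x, b)) (p_nonneg b))
      (integrable_p.const_mul C1)
      (Eventually.of_forall fun b x _ => (hasDerivAt_sect1 V x b).mul_const (p b))
    exact res.2
  have hgcont : Continuous g := by
    rw [continuous_iff_continuousAt]; exact fun a => (hg' a).continuousAt
  have hgdcont : Continuous gd := by
    refine continuous_of_dominated
      (F := fun x (b : ℝ) => Dx V (x, b) * p b) (bound := fun b => C1 * p b)
      (fun x => ((cont_sect1 (Dx V).continuous x).mul continuous_p).aestronglyMeasurable)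
      (fun x => Eventually.of_forall fun b => ?_) (integrable_p.const_mul C1)
      (Eventually.of_forall fun b =>
        ((Dx V).continuous.comp (continuous_id.prodMk continuous_const)).mul continuous_const)
    rw [Real.norm_eq_abs, abs_mul, abs_of_nonneg (p_nonneg b)]
    exact mul_le_mul_of_nonneg_right (hC1 (x, b)) (p_nonneg b)
  -- bounds for the marginals
  have bdd_int : ∀ (f : ℝ → ℝ) (c : ℝ), Continuous f → (∀ b, |f b| ≤ c) →
      |∫ b, f b * p b| ≤ c * m := by
    intro f c hf hfc
    have hc : 0 ≤ c := (abs_nonneg _).trans (hfc 0)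
    have h1 : |∫ b, f b * p b| ≤ ∫ b, |f b| * |p b| := by
      simpa [Real.norm_eq_abs, abs_mul] using norm_integral_le_integral_norm (fun b => f b * p b)
    refine h1.trans ?_
    have h2 : ∫ b, |f b| * |p b| ≤ ∫ b, c * p b := by
      have habs : Integrable (fun b => |f b| * |p b|) := by
        have := (integrable_bdd_p hf c hfc).abs
        refine this.congr (Eventually.of_forall fun b => ?_)
        show |f b * p b| = |f b| * |p b|
        exact abs_mul _ _
      refine integral_mono habs (integrable_p.const_mul c) ?_
      intro b
      show |f b| * |p b| ≤ c * p b
      rw [abs_of_nonneg (p_nonneg b)]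
      exact mul_le_mul_of_nonneg_right (hfc b) (p_nonneg b)
    refine h2.trans (le_of_eq ?_)
    rw [integral_const_mul, m_def]
  have hgb : ∀ a, |g a| ≤ C0 * m :=
    fun a => bdd_int _ C0 (cont_sect1 V.continuous a) (fun b => hC0 (a, b))
  have hgdb : ∀ a, |gd a| ≤ C1 * m :=
    fun a => bdd_int _ C1 (cont_sect1 (Dx V).continuous a) (fun b => hC1 (a, b))
  -- continuity and bounds of Pin, E1, E2
  have cont_marg : ∀ (F : ℝ × ℝ → ℝ), Continuous F → (c : ℝ) → (∀ η, |F η| ≤ c) →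
      Continuous fun a => ∫ b, F (a, b) * p b := by
    intro F hF c hFc
    refine continuous_of_dominated
      (F := fun x (b : ℝ) => F (x, b) * p b) (bound := fun b => c * p b)
      (fun x => ((cont_sect1 hF x).mul continuous_p).aestronglyMeasurable)
      (fun x => Eventually.of_forall fun b => ?_) (integrable_p.const_mul c)
      (Eventually.of_forall fun b =>
        (hF.comp (continuous_id.prodMk continuous_const)).mul continuous_const)
    rw [Real.norm_eq_abs, abs_mul, abs_of_nonneg (p_nonneg b)]
    exact mul_le_mul_of_nonneg_right (hFc (x, b)) (p_nonneg b)
  have hPincont : Continuous Pin := by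
    refine cont_marg _ (V.continuous.pow 2) (C0 ^ 2) fun η => ?_
    rw [Pi.pow_apply, abs_pow]; exact pow_le_pow_left₀ (abs_nonneg _) (hC0 η) 2
  have hE1cont : Continuous E1 := by
    refine cont_marg _ ((Dx V).continuous.pow 2) (C1 ^ 2) fun η => ?_
    rw [Pi.pow_apply, abs_pow]; exact pow_le_pow_left₀ (abs_nonneg _) (hC1 η) 2
  have hE2cont : Continuous E2 := by
    refine cont_marg _ ((Dy V).continuous.pow 2) (C2 ^ 2) fun η => ?_
    rw [Pi.pow_apply, abs_pow]; exact pow_le_pow_left₀ (abs_nonneg _) (hC2 η) 2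
  have hPinb : ∀ a, |Pin a| ≤ C0 ^ 2 * m := by
    intro a
    refine bdd_int _ (C0 ^ 2) (cont_sect1 (V.continuous.pow 2) a) fun b => ?_
    rw [abs_pow]; exact pow_le_pow_left₀ (abs_nonneg _) (hC0 (a, b)) 2
  have hE1b : ∀ a, |E1 a| ≤ C1 ^ 2 * m := by
    intro a
    refine bdd_int _ (C1 ^ 2) (cont_sect1 ((Dx V).continuous.pow 2) a) fun b => ?_
    rw [abs_pow]; exact pow_le_pow_left₀ (abs_nonneg _) (hC1 (a, b)) 2
  have hE2b : ∀ a, |E2 a| ≤ C2 ^ 2 * m := by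
    intro a
    refine bdd_int _ (C2 ^ 2) (cont_sect1 ((Dy V).continuous.pow 2) a) fun b => ?_
    rw [abs_pow]; exact pow_le_pow_left₀ (abs_nonneg _) (hC2 (a, b)) 2
  -- Fubini reductions
  have hP : ∫ η : ℝ × ℝ, (V η) ^ 2 * ρ η = ∫ a, Pin a * p a :=
    fubini_ρ (fun η => (V η) ^ 2) intV2
  have hD1 : ∫ η : ℝ × ℝ, (Dx V η) ^ 2 * ρ η = ∫ a, E1 a * p a :=
    fubini_ρ (fun η => (Dx V η) ^ 2) intD1
  have hD2 : ∫ η : ℝ × ℝ, (Dy V η) ^ 2 * ρ η = ∫ a, E2 a * p a :=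
    fubini_ρ (fun η => (Dy V η) ^ 2) intD2
  have hmean' : ∫ a, g a * p a = 0 := by
    rw [← fubini_ρ (fun η => V η) intV]
    exact hmean
  -- step 1: 1D Poincaré in the second variable, for each fixed a
  have step1 : ∀ a, m * Pin a ≤ (g a) ^ 2 + 2 * m * E2 a := by
    intro a
    exact poincare1D (h := fun b => V (a, b)) (h' := fun b => Dy V (a, b))
      (fun b => hasDerivAt_sect2 V a b) (cont_sect1 (Dy V).continuous a)
      C0 C2 (fun b => hC0 (a, b)) (fun b => hC2 (a, b))
  -- step 2 : 1D Poincaré for the marginal g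
  have step2 : m * (∫ a, (g a) ^ 2 * p a)
      ≤ (∫ a, g a * p a) ^ 2 + 2 * m * ∫ a, (gd a) ^ 2 * p a :=
    poincare1D hg' hgdcont (C0 * m) (C1 * m) hgb hgdb
  -- step 3 : Cauchy–Schwarz for gd
  have step3 : ∀ a, (gd a) ^ 2 ≤ m * E1 a := by
    intro a
    exact csw (cont_sect1 (Dx V).continuous a) C1 (fun b => hC1 (a, b))
  -- assemble
  have int_Pinp : Integrable (fun a => Pin a * p a) :=
    integrable_bdd_p hPincont (C0 ^ 2 * m) hPinb
  have int_E1p : Integrable (fun a => E1 a * p a) :=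
    integrable_bdd_p hE1cont (C1 ^ 2 * m) hE1b
  have int_E2p : Integrable (fun a => E2 a * p a) :=
    integrable_bdd_p hE2cont (C2 ^ 2 * m) hE2b
  have int_g2p : Integrable (fun a => (g a) ^ 2 * p a) := by
    refine integrable_bdd_p (hgcont.pow 2) ((C0 * m) ^ 2) fun a => ?_
    rw [abs_pow]; exact pow_le_pow_left₀ (abs_nonneg _) (hgb a) 2
  have int_gd2p : Integrable (fun a => (gd a) ^ 2 * p a) := by
    refine integrable_bdd_p (hgdcont.pow 2) ((C1 * m) ^ 2) fun a => ?_
    rw [abs_pow]; exact pow_le_pow_left₀ (abs_nonneg _) (hgdb a) 2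
  -- m * P ≤ ∫ g² p + 2 m D2
  have main1 : m * (∫ a, Pin a * p a)
      ≤ (∫ a, (g a) ^ 2 * p a) + 2 * m * ∫ a, E2 a * p a := by
    have h1 : ∫ a, (m * Pin a) * p a ≤ ∫ a, ((g a) ^ 2 + 2 * m * E2 a) * p a := by
      refine integral_mono ?_ ?_ ?_
      · have := int_Pinp.const_mul m
        refine this.congr ?_
        refine Eventually.of_forall fun a => ?_
        ring
      · have : Integrable (fun a => (g a) ^ 2 * p a + 2 * m * (E2 a * p a)) :=
          int_g2p.add (int_E2p.const_mul (2 * m))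
        refine this.congr (Eventually.of_forall fun a => ?_)
        ring
      · intro a
        exact mul_le_mul_of_nonneg_right (step1 a) (p_nonneg a)
    have e1 : ∫ a, (m * Pin a) * p a = m * ∫ a, Pin a * p a := by
      rw [← integral_const_mul]
      congr 1; funext a; ring
    have e2 : ∫ a, ((g a) ^ 2 + 2 * m * E2 a) * p a
        = (∫ a, (g a) ^ 2 * p a) + 2 * m * ∫ a, E2 a * p a := by
      have e3 : ∀ a, ((g a) ^ 2 + 2 * m * E2 a) * p a
          = (g a) ^ 2 * p a + (2 * m) * (E2 a * p a) := fun a => by ring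
      simp_rw [e3]
      rw [integral_add int_g2p (int_E2p.const_mul (2 * m)), integral_const_mul]
    rw [← e1, ← e2]
    exact h1
  -- ∫ gd² p ≤ m * D1
  have main3 : (∫ a, (gd a) ^ 2 * p a) ≤ m * ∫ a, E1 a * p a := by
    have h1 : ∫ a, (gd a) ^ 2 * p a ≤ ∫ a, (m * E1 a) * p a := by
      refine integral_mono int_gd2p ?_ ?_
      · have := int_E1p.const_mul m
        refine this.congr (Eventually.of_forall fun a => ?_)
        ring
      · intro a
        exact mul_le_mul_of_nonneg_right (step3 a) (p_nonneg a)
    have e1 : ∫ a, (m * E1 a) * p a = m * ∫ a, E1 a * p a := by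
      rw [← integral_const_mul]
      congr 1; funext a; ring
    rw [← e1]
    exact h1
  -- combine
  have hm := m_pos
  rw [hmean'] at step2
  have c1 : m * (∫ a, (g a) ^ 2 * p a) ≤ 2 * m * (m * ∫ a, E1 a * p a) := by
    calc m * (∫ a, (g a) ^ 2 * p a) ≤ 0 ^ 2 + 2 * m * ∫ a, (gd a) ^ 2 * p a := step2
    _ = 2 * m * ∫ a, (gd a) ^ 2 * p a := by ring
    _ ≤ 2 * m * (m * ∫ a, E1 a * p a) :=
        mul_le_mul_of_nonneg_left main3 (by linarith)
  have c2 : (∫ a, (g a) ^ 2 * p a) ≤ 2 * m * ∫ a, E1 a * p a := by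
    refine le_of_mul_le_mul_left ?_ hm
    calc m * (∫ a, (g a) ^ 2 * p a) ≤ 2 * m * (m * ∫ a, E1 a * p a) := c1
    _ = m * (2 * m * ∫ a, E1 a * p a) := by ring
  have c3 : m * (∫ a, Pin a * p a)
      ≤ m * (2 * ((∫ a, E1 a * p a) + ∫ a, E2 a * p a)) := by
    calc m * (∫ a, Pin a * p a) ≤ (∫ a, (g a) ^ 2 * p a) + 2 * m * ∫ a, E2 a * p a := main1
    _ ≤ 2 * m * (∫ a, E1 a * p a) + 2 * m * ∫ a, E2 a * p a := by linarith
    _ = m * (2 * ((∫ a, E1 a * p a) + ∫ a, E2 a * p a)) := by ring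
  have c4 : (∫ a, Pin a * p a) ≤ 2 * ((∫ a, E1 a * p a) + ∫ a, E2 a * p a) :=
    le_of_mul_le_mul_left c3 hm
  -- final rewriting
  have hsum : ∫ η : ℝ × ℝ, ((Dx V η) ^ 2 + (Dy V η) ^ 2) * ρ η
      = (∫ η : ℝ × ℝ, (Dx V η) ^ 2 * ρ η) + ∫ η : ℝ × ℝ, (Dy V η) ^ 2 * ρ η := by
    have e : ∀ η : ℝ × ℝ, ((Dx V η) ^ 2 + (Dy V η) ^ 2) * ρ η
        = (Dx V η) ^ 2 * ρ η + (Dy V η) ^ 2 * ρ η := fun η => by ring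
    simp_rw [e]
    exact integral_add intD1 intD2
  rw [hP, hsum, hD1, hD2]
  exact c4

end FP

namespace FP

lemma ρ_mul_wt (η : ℝ × ℝ) : ρ η * wt η = 1 := by
  rw [ρ_eq, wt, ← Real.exp_add]
  have h : -(η.1 ^ 2 + η.2 ^ 2) / 4 + (η.1 ^ 2 + η.2 ^ 2) / 4 = 0 := by ring
  rw [h, Real.exp_zero]

/-- The function `W = V · ρ`. -/
def Wf (V : SchwartzMap (ℝ × ℝ) ℝ) : ℝ × ℝ → ℝ := fun η => V η * ρ η

lemma pd1_Wf (V : SchwartzMap (ℝ × ℝ) ℝ) :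
    pd1 (Wf V) = fun η => (Dx V η - η.1 / 2 * V η) * ρ η := by
  funext η
  have h1 := (hasDerivAt_sect1 V η.1 η.2).mul ((hasDerivAt_p η.1).mul_const (p η.2))
  have h2 : HasDerivAt (fun s => Wf V (s, η.2)) ((Dx V η - η.1 / 2 * V η) * ρ η) η.1 := by
    refine h1.congr_deriv ?_
    rw [ρ]
    ring
  exact h2.deriv

lemma pd2_Wf (V : SchwartzMap (ℝ × ℝ) ℝ) :
    pd2 (Wf V) = fun η => (Dy V η - η.2 / 2 * V η) * ρ η := by
  funext η
  have h1 := (hasDerivAt_sect2 V η.1 η.2).mul ((hasDerivAt_p η.2).const_mul (p η.1))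
  have h2 : HasDerivAt (fun t => Wf V (η.1, t)) ((Dy V η - η.2 / 2 * V η) * ρ η) η.2 := by
    refine h1.congr_deriv ?_
    rw [ρ]
    ring
  exact h2.deriv

lemma pd11_Wf (V : SchwartzMap (ℝ × ℝ) ℝ) :
    pd1 (pd1 (Wf V)) = fun η =>
      (Dx (Dx V) η - η.1 * Dx V η - V η / 2 + η.1 ^ 2 * V η / 4) * ρ η := by
  rw [pd1_Wf]
  funext η
  have hsub : HasDerivAt (fun s => Dx V (s, η.2) - s / 2 * V (s, η.2))
      (Dx (Dx V) η - (1 / 2 * V η + η.1 / 2 * Dx V η)) η.1 := by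
    have hb := ((hasDerivAt_id η.1).div_const 2).mul (hasDerivAt_sect1 V η.1 η.2)
    have ha := hasDerivAt_sect1 (Dx V) η.1 η.2
    refine (ha.sub hb).congr_deriv ?_
    simp only [id_eq]
    try ring
  have h1 := hsub.mul ((hasDerivAt_p η.1).mul_const (p η.2))
  have h2 : HasDerivAt (fun s => (Dx V (s, η.2) - s / 2 * V (s, η.2)) * ρ (s, η.2))
      ((Dx (Dx V) η - η.1 * Dx V η - V η / 2 + η.1 ^ 2 * V η / 4) * ρ η) η.1 := by
    refine h1.congr_deriv ?_
    rw [ρ]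
    ring
  exact h2.deriv

lemma pd22_Wf (V : SchwartzMap (ℝ × ℝ) ℝ) :
    pd2 (pd2 (Wf V)) = fun η =>
      (Dy (Dy V) η - η.2 * Dy V η - V η / 2 + η.2 ^ 2 * V η / 4) * ρ η := by
  rw [pd2_Wf]
  funext η
  have hsub : HasDerivAt (fun t => Dy V (η.1, t) - t / 2 * V (η.1, t))
      (Dy (Dy V) η - (1 / 2 * V η + η.2 / 2 * Dy V η)) η.2 := by
    have hb := ((hasDerivAt_id η.2).div_const 2).mul (hasDerivAt_sect2 V η.1 η.2)
    have ha := hasDerivAt_sect2 (Dy V) η.1 η.2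
    refine (ha.sub hb).congr_deriv ?_
    simp only [id_eq]
    try ring
  have h1 := hsub.mul ((hasDerivAt_p η.2).const_mul (p η.1))
  have h2 : HasDerivAt (fun t => (Dy V (η.1, t) - t / 2 * V (η.1, t)) * ρ (η.1, t))
      ((Dy (Dy V) η - η.2 * Dy V η - V η / 2 + η.2 ^ 2 * V η / 4) * ρ η) η.2 := by
    refine h1.congr_deriv ?_
    rw [ρ]
    ring
  exact h2.deriv

lemma LFP_Wf (V : SchwartzMap (ℝ × ℝ) ℝ) (η : ℝ × ℝ) :
    LFP (Wf V) η
      = (Dx (Dx V) η + Dy (Dy V) η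
          - (1 / 2) * (η.1 * Dx V η + η.2 * Dy V η)) * ρ η := by
  rw [LFP, pd11_Wf, pd22_Wf, pd1_Wf, pd2_Wf]
  show (Dx (Dx V) η - η.1 * Dx V η - V η / 2 + η.1 ^ 2 * V η / 4) * ρ η
      + (Dy (Dy V) η - η.2 * Dy V η - V η / 2 + η.2 ^ 2 * V η / 4) * ρ η
      + (1 / 2) * (η.1 * ((Dx V η - η.1 / 2 * V η) * ρ η)
          + η.2 * ((Dy V η - η.2 / 2 * V η) * ρ η))
      + Wf V η = _
  rw [Wf]
  ring

end FP

namespace FP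

lemma abs_le_quartic (a b : ℝ) : |a| ≤ (1 + a ^ 2) ^ 2 * (1 + b ^ 2) ^ 2 := by
  have h1 : |a| ≤ 1 + a ^ 2 := by
    nlinarith [sq_nonneg (|a| - 1), sq_abs a, abs_nonneg a]
  have h2 : (1 + a ^ 2) ≤ (1 + a ^ 2) ^ 2 := by nlinarith [sq_nonneg a, sq_nonneg (a ^ 2)]
  have h3 : (1 + a ^ 2) ^ 2 ≤ (1 + a ^ 2) ^ 2 * (1 + b ^ 2) ^ 2 :=
    le_mul_of_one_le_right (by positivity) (by nlinarith [sq_nonneg b, sq_nonneg (b ^ 2)])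
  linarith

lemma sq_le_quartic (a b : ℝ) : a ^ 2 ≤ (1 + a ^ 2) ^ 2 * (1 + b ^ 2) ^ 2 := by
  have h2 : a ^ 2 ≤ (1 + a ^ 2) ^ 2 := by nlinarith [sq_nonneg a, sq_nonneg (a ^ 2)]
  have h3 : (1 + a ^ 2) ^ 2 ≤ (1 + a ^ 2) ^ 2 * (1 + b ^ 2) ^ 2 :=
    le_mul_of_one_le_right (by positivity) (by nlinarith [sq_nonneg b, sq_nonneg (b ^ 2)])
  linarith

lemma sect_integrable1 {G : ℝ × ℝ → ℝ} (hG : Continuous G) (K : ℝ)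
    (hb : ∀ η : ℝ × ℝ, |G η| ≤ K * ((1 + η.1 ^ 2) ^ 2 * (1 + η.2 ^ 2) ^ 2)) (y : ℝ) :
    Integrable (fun s => G (s, y) * ρ (s, y)) := by
  have hK : 0 ≤ K := by
    have h0 := (abs_nonneg (G (0, 0))).trans (hb (0, 0))
    norm_num at h0
    linarith
  apply integrable_dom1 (f := fun s => G (s, y) * ρ (s, y))
    ((hG.comp (continuous_id.prodMk continuous_const)).mul
      (continuous_ρ.comp (continuous_id.prodMk continuous_const)))
    (K * (1 + y ^ 2) ^ 2)
  intro s
  rw [abs_mul, abs_of_nonneg (ρ_nonneg (s, y))]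
  have h1 : |G (s, y)| * ρ (s, y)
      ≤ (K * ((1 + s ^ 2) ^ 2 * (1 + y ^ 2) ^ 2)) * (p s * p y) :=
    mul_le_mul_of_nonneg_right (hb (s, y)) (ρ_nonneg (s, y))
  refine h1.trans ?_
  have h2 : (K * ((1 + s ^ 2) ^ 2 * (1 + y ^ 2) ^ 2)) * (p s * p y)
      = ((K * (1 + y ^ 2) ^ 2) * ((1 + s ^ 2) ^ 2 * p s)) * p y := by ring
  rw [h2]
  calc ((K * (1 + y ^ 2) ^ 2) * ((1 + s ^ 2) ^ 2 * p s)) * p y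
      ≤ ((K * (1 + y ^ 2) ^ 2) * ((1 + s ^ 2) ^ 2 * p s)) * 1 := by
        refine mul_le_mul_of_nonneg_left (p_le_one y) ?_
        have := p_nonneg s
        positivity
  _ = K * (1 + y ^ 2) ^ 2 * ((1 + s ^ 2) ^ 2 * p s) := by ring

lemma sect_integrable2 {G : ℝ × ℝ → ℝ} (hG : Continuous G) (K : ℝ)
    (hb : ∀ η : ℝ × ℝ, |G η| ≤ K * ((1 + η.1 ^ 2) ^ 2 * (1 + η.2 ^ 2) ^ 2)) (x : ℝ) :
    Integrable (fun t => G (x, t) * ρ (x, t)) := by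
  have hK : 0 ≤ K := by
    have h0 := (abs_nonneg (G (0, 0))).trans (hb (0, 0))
    norm_num at h0
    linarith
  apply integrable_dom1 (f := fun t => G (x, t) * ρ (x, t))
    ((hG.comp (continuous_const.prodMk continuous_id)).mul
      (continuous_ρ.comp (continuous_const.prodMk continuous_id)))
    (K * (1 + x ^ 2) ^ 2)
  intro t
  rw [abs_mul, abs_of_nonneg (ρ_nonneg (x, t))]
  have h1 : |G (x, t)| * ρ (x, t)
      ≤ (K * ((1 + x ^ 2) ^ 2 * (1 + t ^ 2) ^ 2)) * (p x * p t) :=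
    mul_le_mul_of_nonneg_right (hb (x, t)) (ρ_nonneg (x, t))
  refine h1.trans ?_
  have h2 : (K * ((1 + x ^ 2) ^ 2 * (1 + t ^ 2) ^ 2)) * (p x * p t)
      = ((K * (1 + x ^ 2) ^ 2) * ((1 + t ^ 2) ^ 2 * p t)) * p x := by ring
  rw [h2]
  calc ((K * (1 + x ^ 2) ^ 2) * ((1 + t ^ 2) ^ 2 * p t)) * p x
      ≤ ((K * (1 + x ^ 2) ^ 2) * ((1 + t ^ 2) ^ 2 * p t)) * 1 := by
        refine mul_le_mul_of_nonneg_left (p_le_one x) ?_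
        have := p_nonneg t
        positivity
  _ = K * (1 + x ^ 2) ^ 2 * ((1 + t ^ 2) ^ 2 * p t) := by ring

lemma tendsto_quart_p_atTop : Tendsto (fun s : ℝ => (1 + s ^ 2) ^ 2 * p s) atTop (nhds 0) := by
  have h := ((tendsto_poly_p_atTop 0).add ((tendsto_poly_p_atTop 2).const_mul 2)).add
    (tendsto_poly_p_atTop 4)
  norm_num at h
  refine h.congr fun s => ?_
  have h4 : |s| ^ 4 = s ^ 4 := by rw [pow_abs, abs_of_nonneg (by positivity : (0:ℝ) ≤ s ^ 4)]
  rw [h4]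
  ring

lemma tendsto_quart_p_atBot : Tendsto (fun s : ℝ => (1 + s ^ 2) ^ 2 * p s) atBot (nhds 0) := by
  have h := ((tendsto_poly_p_atBot 0).add ((tendsto_poly_p_atBot 2).const_mul 2)).add
    (tendsto_poly_p_atBot 4)
  norm_num at h
  refine h.congr fun s => ?_
  have h4 : |s| ^ 4 = s ^ 4 := by rw [pow_abs, abs_of_nonneg (by positivity : (0:ℝ) ≤ s ^ 4)]
  rw [h4]
  ring

lemma sect_bound {G : ℝ × ℝ → ℝ} {K : ℝ}
    (hb : ∀ η : ℝ × ℝ, |G η| ≤ K * ((1 + η.1 ^ 2) ^ 2 * (1 + η.2 ^ 2) ^ 2)) (s y : ℝ) :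
    ‖G (s, y) * ρ (s, y)‖ ≤ (K * (1 + y ^ 2) ^ 2) * ((1 + s ^ 2) ^ 2 * p s) := by
  have hK : 0 ≤ K := by
    have h0 := (abs_nonneg (G (0, 0))).trans (hb (0, 0))
    norm_num at h0
    linarith
  rw [Real.norm_eq_abs, abs_mul, abs_of_nonneg (ρ_nonneg (s, y))]
  have h1 : |G (s, y)| * ρ (s, y)
      ≤ (K * ((1 + s ^ 2) ^ 2 * (1 + y ^ 2) ^ 2)) * (p s * p y) :=
    mul_le_mul_of_nonneg_right (hb (s, y)) (ρ_nonneg (s, y))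
  refine h1.trans ?_
  have h2 : (K * ((1 + s ^ 2) ^ 2 * (1 + y ^ 2) ^ 2)) * (p s * p y)
      = ((K * (1 + y ^ 2) ^ 2) * ((1 + s ^ 2) ^ 2 * p s)) * p y := by ring
  rw [h2]
  calc ((K * (1 + y ^ 2) ^ 2) * ((1 + s ^ 2) ^ 2 * p s)) * p y
      ≤ ((K * (1 + y ^ 2) ^ 2) * ((1 + s ^ 2) ^ 2 * p s)) * 1 := by
        refine mul_le_mul_of_nonneg_left (p_le_one y) ?_
        have := p_nonneg s
        positivity
  _ = (K * (1 + y ^ 2) ^ 2) * ((1 + s ^ 2) ^ 2 * p s) := by ring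

lemma sect_tendsto1_atTop {G : ℝ × ℝ → ℝ} (K : ℝ)
    (hb : ∀ η : ℝ × ℝ, |G η| ≤ K * ((1 + η.1 ^ 2) ^ 2 * (1 + η.2 ^ 2) ^ 2)) (y : ℝ) :
    Tendsto (fun s => G (s, y) * ρ (s, y)) atTop (nhds 0) := by
  refine squeeze_zero_norm (a := fun s => (K * (1 + y ^ 2) ^ 2) * ((1 + s ^ 2) ^ 2 * p s))
    (fun s => sect_bound hb s y) ?_
  have := tendsto_quart_p_atTop.const_mul (K * (1 + y ^ 2) ^ 2)
  simpa using this

lemma sect_tendsto1_atBot {G : ℝ × ℝ → ℝ} (K : ℝ)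
    (hb : ∀ η : ℝ × ℝ, |G η| ≤ K * ((1 + η.1 ^ 2) ^ 2 * (1 + η.2 ^ 2) ^ 2)) (y : ℝ) :
    Tendsto (fun s => G (s, y) * ρ (s, y)) atBot (nhds 0) := by
  refine squeeze_zero_norm (a := fun s => (K * (1 + y ^ 2) ^ 2) * ((1 + s ^ 2) ^ 2 * p s))
    (fun s => sect_bound hb s y) ?_
  have := tendsto_quart_p_atBot.const_mul (K * (1 + y ^ 2) ^ 2)
  simpa using this

lemma sect_bound2 {G : ℝ × ℝ → ℝ} {K : ℝ}
    (hb : ∀ η : ℝ × ℝ, |G η| ≤ K * ((1 + η.1 ^ 2) ^ 2 * (1 + η.2 ^ 2) ^ 2)) (x t : ℝ) :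
    ‖G (x, t) * ρ (x, t)‖ ≤ (K * (1 + x ^ 2) ^ 2) * ((1 + t ^ 2) ^ 2 * p t) := by
  have hK : 0 ≤ K := by
    have h0 := (abs_nonneg (G (0, 0))).trans (hb (0, 0))
    norm_num at h0
    linarith
  rw [Real.norm_eq_abs, abs_mul, abs_of_nonneg (ρ_nonneg (x, t))]
  have h1 : |G (x, t)| * ρ (x, t)
      ≤ (K * ((1 + x ^ 2) ^ 2 * (1 + t ^ 2) ^ 2)) * (p x * p t) :=
    mul_le_mul_of_nonneg_right (hb (x, t)) (ρ_nonneg (x, t))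
  refine h1.trans ?_
  have h2 : (K * ((1 + x ^ 2) ^ 2 * (1 + t ^ 2) ^ 2)) * (p x * p t)
      = ((K * (1 + x ^ 2) ^ 2) * ((1 + t ^ 2) ^ 2 * p t)) * p x := by ring
  rw [h2]
  calc ((K * (1 + x ^ 2) ^ 2) * ((1 + t ^ 2) ^ 2 * p t)) * p x
      ≤ ((K * (1 + x ^ 2) ^ 2) * ((1 + t ^ 2) ^ 2 * p t)) * 1 := by
        refine mul_le_mul_of_nonneg_left (p_le_one x) ?_
        have := p_nonneg t
        positivity
  _ = (K * (1 + x ^ 2) ^ 2) * ((1 + t ^ 2) ^ 2 * p t) := by ring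

lemma sect_tendsto2_atTop {G : ℝ × ℝ → ℝ} (K : ℝ)
    (hb : ∀ η : ℝ × ℝ, |G η| ≤ K * ((1 + η.1 ^ 2) ^ 2 * (1 + η.2 ^ 2) ^ 2)) (x : ℝ) :
    Tendsto (fun t => G (x, t) * ρ (x, t)) atTop (nhds 0) := by
  refine squeeze_zero_norm (a := fun t => (K * (1 + x ^ 2) ^ 2) * ((1 + t ^ 2) ^ 2 * p t))
    (fun t => sect_bound2 hb x t) ?_
  have := tendsto_quart_p_atTop.const_mul (K * (1 + x ^ 2) ^ 2)
  simpa using this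

lemma sect_tendsto2_atBot {G : ℝ × ℝ → ℝ} (K : ℝ)
    (hb : ∀ η : ℝ × ℝ, |G η| ≤ K * ((1 + η.1 ^ 2) ^ 2 * (1 + η.2 ^ 2) ^ 2)) (x : ℝ) :
    Tendsto (fun t => G (x, t) * ρ (x, t)) atBot (nhds 0) := by
  refine squeeze_zero_norm (a := fun t => (K * (1 + x ^ 2) ^ 2) * ((1 + t ^ 2) ^ 2 * p t))
    (fun t => sect_bound2 hb x t) ?_
  have := tendsto_quart_p_atBot.const_mul (K * (1 + x ^ 2) ^ 2)
  simpa using this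

/-- Gaussian integration by parts, first variable. -/
lemma ibp_gauss1 {G G' : ℝ × ℝ → ℝ} (hGc : Continuous G) (hG'c : Continuous G')
    (KG KG' : ℝ)
    (hbG : ∀ η : ℝ × ℝ, |G η| ≤ KG * ((1 + η.1 ^ 2) ^ 2 * (1 + η.2 ^ 2) ^ 2))
    (hbG' : ∀ η : ℝ × ℝ, |G' η| ≤ KG' * ((1 + η.1 ^ 2) ^ 2 * (1 + η.2 ^ 2) ^ 2))
    (hd : ∀ η : ℝ × ℝ, HasDerivAt (fun s => G (s, η.2) * ρ (s, η.2)) (G' η * ρ η) η.1) :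
    ∫ η : ℝ × ℝ, G' η * ρ η = 0 := by
  refine ibp1 (fun η => G η * ρ η) (fun η => G' η * ρ η) (fun η => hd η)
    (integrable_dom hG'c KG' hbG') (fun y => sect_integrable1 hG'c KG' hbG' y)
    (fun y => sect_tendsto1_atTop KG hbG y) (fun y => sect_tendsto1_atBot KG hbG y)

/-- Gaussian integration by parts, second variable. -/
lemma ibp_gauss2 {G G' : ℝ × ℝ → ℝ} (hGc : Continuous G) (hG'c : Continuous G')
    (KG KG' : ℝ)
    (hbG : ∀ η : ℝ × ℝ, |G η| ≤ KG * ((1 + η.1 ^ 2) ^ 2 * (1 + η.2 ^ 2) ^ 2))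
    (hbG' : ∀ η : ℝ × ℝ, |G' η| ≤ KG' * ((1 + η.1 ^ 2) ^ 2 * (1 + η.2 ^ 2) ^ 2))
    (hd : ∀ η : ℝ × ℝ, HasDerivAt (fun t => G (η.1, t) * ρ (η.1, t)) (G' η * ρ η) η.2) :
    ∫ η : ℝ × ℝ, G' η * ρ η = 0 := by
  refine ibp2 (fun η => G η * ρ η) (fun η => G' η * ρ η) (fun η => hd η)
    (integrable_dom hG'c KG' hbG') (fun x => sect_integrable2 hG'c KG' hbG' x)
    (fun x => sect_tendsto2_atTop KG hbG x) (fun x => sect_tendsto2_atBot KG hbG x)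

end FP

namespace FP

lemma mul_le_3 {x y z cx cy cz : ℝ} (hx : |x| ≤ cx) (hy : |y| ≤ cy) (hz : |z| ≤ cz) :
    |x * y * z| ≤ cx * cy * cz := by
  have hcx : 0 ≤ cx := (abs_nonneg x).trans hx
  have hcy : 0 ≤ cy := (abs_nonneg y).trans hy
  rw [abs_mul, abs_mul]
  exact mul_le_mul (mul_le_mul hx hy (abs_nonneg y) hcx) hz (abs_nonneg z)
    (mul_nonneg hcx hcy)

lemma abs2_le_quartic (a b : ℝ) : |b| ≤ (1 + a ^ 2) ^ 2 * (1 + b ^ 2) ^ 2 := by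
  rw [mul_comm]; exact abs_le_quartic b a

lemma sq2_le_quartic (a b : ℝ) : b ^ 2 ≤ (1 + a ^ 2) ^ 2 * (1 + b ^ 2) ^ 2 := by
  rw [mul_comm]; exact sq_le_quartic b a

set_option maxHeartbeats 2000000 in
lemma main_core (V : SchwartzMap (ℝ × ℝ) ℝ)
    (hmean : ∫ η : ℝ × ℝ, V η * ρ η = 0) :
    ((∫ η : ℝ × ℝ, Wf V η * LFP (Wf V) η * wt η)
        = (∫ η : ℝ × ℝ, (Wf V η) ^ 2 * wt η)
          - (∫ η : ℝ × ℝ, ((pd1 (Wf V) η) ^ 2 + (pd2 (Wf V) η) ^ 2) * wt η)) ∧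
      ((∫ η : ℝ × ℝ, Wf V η * LFP (Wf V) η * wt η)
        ≤ -(1 / 12) * (∫ η : ℝ × ℝ, (Wf V η) ^ 2 * wt η)
          - (1 / 96) * (∫ η : ℝ × ℝ, (η.1 ^ 2 + η.2 ^ 2) * (Wf V η) ^ 2 * wt η)
          - (1 / 6) * (∫ η : ℝ × ℝ, ((pd1 (Wf V) η) ^ 2 + (pd2 (Wf V) η) ^ 2) * wt η)) := by
  obtain ⟨C0, hC00, hC0⟩ := schwartz_bound V
  obtain ⟨C1, hC10, hC1⟩ := schwartz_bound (Dx V)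
  obtain ⟨C2, hC20, hC2⟩ := schwartz_bound (Dy V)
  obtain ⟨C3, hC30, hC3⟩ := schwartz_bound (Dx (Dx V))
  obtain ⟨C4, hC40, hC4⟩ := schwartz_bound (Dy (Dy V))
  -- convenient shorthand facts
  have hQ0 : ∀ η : ℝ × ℝ, (0:ℝ) ≤ (1 + η.1 ^ 2) ^ 2 * (1 + η.2 ^ 2) ^ 2 := fun η => by positivity
  have hVsq : ∀ η : ℝ × ℝ, |(V η) ^ 2| ≤ C0 ^ 2 := by
    intro η; rw [abs_pow]; exact pow_le_pow_left₀ (abs_nonneg _) (hC0 η) 2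
  have hDxsq : ∀ η : ℝ × ℝ, |(Dx V η) ^ 2| ≤ C1 ^ 2 := by
    intro η; rw [abs_pow]; exact pow_le_pow_left₀ (abs_nonneg _) (hC1 η) 2
  have hDysq : ∀ η : ℝ × ℝ, |(Dy V η) ^ 2| ≤ C2 ^ 2 := by
    intro η; rw [abs_pow]; exact pow_le_pow_left₀ (abs_nonneg _) (hC2 η) 2
  have habs_sq1 : ∀ η : ℝ × ℝ, |η.1 ^ 2| ≤ (1 + η.1 ^ 2) ^ 2 * (1 + η.2 ^ 2) ^ 2 := by
    intro η; rw [abs_of_nonneg (sq_nonneg _)]; exact sq_le_quartic η.1 η.2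
  have habs_sq2 : ∀ η : ℝ × ℝ, |η.2 ^ 2| ≤ (1 + η.1 ^ 2) ^ 2 * (1 + η.2 ^ 2) ^ 2 := by
    intro η; rw [abs_of_nonneg (sq_nonneg _)]; exact sq2_le_quartic η.1 η.2
  -- integrability of the atoms
  have int1 : Integrable (fun η : ℝ × ℝ => (V η) ^ 2 * ρ η) :=
    integrable_bdd_ρ (V.continuous.pow 2) (C0 ^ 2) hVsq
  have int6 : Integrable (fun η : ℝ × ℝ => (Dx V η) ^ 2 * ρ η) :=
    integrable_bdd_ρ ((Dx V).continuous.pow 2) (C1 ^ 2) hDxsq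
  have int7 : Integrable (fun η : ℝ × ℝ => (Dy V η) ^ 2 * ρ η) :=
    integrable_bdd_ρ ((Dy V).continuous.pow 2) (C2 ^ 2) hDysq
  have int8 : Integrable (fun η : ℝ × ℝ => V η * Dx (Dx V) η * ρ η) := by
    refine integrable_bdd_ρ (V.continuous.mul (Dx (Dx V)).continuous) (C0 * C3) fun η => ?_
    rw [abs_mul]
    exact mul_le_mul (hC0 η) (hC3 η) (abs_nonneg _) hC00
  have int9 : Integrable (fun η : ℝ × ℝ => V η * Dy (Dy V) η * ρ η) := by
    refine integrable_bdd_ρ (V.continuous.mul (Dy (Dy V)).continuous) (C0 * C4) fun η => ?_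
    rw [abs_mul]
    exact mul_le_mul (hC0 η) (hC4 η) (abs_nonneg _) hC00
  have int2 : Integrable (fun η : ℝ × ℝ => η.1 ^ 2 * (V η) ^ 2 * ρ η) := by
    refine integrable_dom ((continuous_fst.pow 2).mul (V.continuous.pow 2))
      (C0 ^ 2) fun η => ?_
    have h := mul_le_3 (habs_sq1 η) (hVsq η) (le_refl |(1:ℝ)|)
    rw [mul_one, abs_one, mul_one] at h
    calc |η.1 ^ 2 * (V η) ^ 2| ≤ (1 + η.1 ^ 2) ^ 2 * (1 + η.2 ^ 2) ^ 2 * C0 ^ 2 := h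
    _ = C0 ^ 2 * ((1 + η.1 ^ 2) ^ 2 * (1 + η.2 ^ 2) ^ 2) := by ring
  have int3 : Integrable (fun η : ℝ × ℝ => η.2 ^ 2 * (V η) ^ 2 * ρ η) := by
    refine integrable_dom ((continuous_snd.pow 2).mul (V.continuous.pow 2))
      (C0 ^ 2) fun η => ?_
    have h := mul_le_3 (habs_sq2 η) (hVsq η) (le_refl |(1:ℝ)|)
    rw [mul_one, abs_one, mul_one] at h
    calc |η.2 ^ 2 * (V η) ^ 2| ≤ (1 + η.1 ^ 2) ^ 2 * (1 + η.2 ^ 2) ^ 2 * C0 ^ 2 := h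
    _ = C0 ^ 2 * ((1 + η.1 ^ 2) ^ 2 * (1 + η.2 ^ 2) ^ 2) := by ring
  have int4 : Integrable (fun η : ℝ × ℝ => η.1 * V η * Dx V η * ρ η) := by
    refine integrable_dom ((continuous_fst.mul V.continuous).mul (Dx V).continuous)
      (C0 * C1) fun η => ?_
    have h := mul_le_3 (abs_le_quartic η.1 η.2) (hC0 η) (hC1 η)
    calc |η.1 * V η * Dx V η|
        ≤ (1 + η.1 ^ 2) ^ 2 * (1 + η.2 ^ 2) ^ 2 * C0 * C1 := h
    _ = C0 * C1 * ((1 + η.1 ^ 2) ^ 2 * (1 + η.2 ^ 2) ^ 2) := by ring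
  have int5 : Integrable (fun η : ℝ × ℝ => η.2 * V η * Dy V η * ρ η) := by
    refine integrable_dom ((continuous_snd.mul V.continuous).mul (Dy V).continuous)
      (C0 * C2) fun η => ?_
    have h := mul_le_3 (abs2_le_quartic η.1 η.2) (hC0 η) (hC2 η)
    calc |η.2 * V η * Dy V η|
        ≤ (1 + η.1 ^ 2) ^ 2 * (1 + η.2 ^ 2) ^ 2 * C0 * C2 := h
    _ = C0 * C2 * ((1 + η.1 ^ 2) ^ 2 * (1 + η.2 ^ 2) ^ 2) := by ring
  -- the atoms
  set A1 := ∫ η : ℝ × ℝ, (V η) ^ 2 * ρ η with hA1def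
  set A2 := ∫ η : ℝ × ℝ, η.1 ^ 2 * (V η) ^ 2 * ρ η with hA2def
  set A3 := ∫ η : ℝ × ℝ, η.2 ^ 2 * (V η) ^ 2 * ρ η with hA3def
  set A4 := ∫ η : ℝ × ℝ, η.1 * V η * Dx V η * ρ η with hA4def
  set A5 := ∫ η : ℝ × ℝ, η.2 * V η * Dy V η * ρ η with hA5def
  set A6 := ∫ η : ℝ × ℝ, (Dx V η) ^ 2 * ρ η with hA6def
  set A7 := ∫ η : ℝ × ℝ, (Dy V η) ^ 2 * ρ η with hA7def
  set A8 := ∫ η : ℝ × ℝ, V η * Dx (Dx V) η * ρ η with hA8def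
  set A9 := ∫ η : ℝ × ℝ, V η * Dy (Dy V) η * ρ η with hA9def
  -- IBP identity A : ∂₁ of (η₁ V² ρ)
  have hIBPA : ∫ η : ℝ × ℝ, ((V η) ^ 2 + 2 * (η.1 * V η * Dx V η)
      - η.1 ^ 2 * (V η) ^ 2 / 2) * ρ η = 0 := by
    refine ibp_gauss1 (G := fun η => η.1 * (V η) ^ 2)
      (continuous_fst.mul (V.continuous.pow 2))
      ((((V.continuous.pow 2)).add
        ((continuous_const.mul ((continuous_fst.mul V.continuous).mul (Dx V).continuous)))).sub
        (((continuous_fst.pow 2).mul (V.continuous.pow 2)).div_const 2))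
      (C0 ^ 2) (C0 ^ 2 + 2 * (C0 * C1) + C0 ^ 2 / 2) (fun η => ?_) (fun η => ?_) (fun η => ?_)
    · -- bound for G
      have h := mul_le_3 (abs_le_quartic η.1 η.2) (hVsq η) (le_refl |(1:ℝ)|)
      rw [mul_one, abs_one, mul_one] at h
      calc |η.1 * (V η) ^ 2| ≤ (1 + η.1 ^ 2) ^ 2 * (1 + η.2 ^ 2) ^ 2 * C0 ^ 2 := h
      _ = C0 ^ 2 * ((1 + η.1 ^ 2) ^ 2 * (1 + η.2 ^ 2) ^ 2) := by ring
    · -- bound for G'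
      have t1 : |(V η) ^ 2| ≤ C0 ^ 2 * ((1 + η.1 ^ 2) ^ 2 * (1 + η.2 ^ 2) ^ 2) :=
        (hVsq η).trans (le_mul_of_one_le_right (by positivity) (one_le_quartic _ _))
      have t2 : |2 * (η.1 * V η * Dx V η)|
          ≤ 2 * (C0 * C1) * ((1 + η.1 ^ 2) ^ 2 * (1 + η.2 ^ 2) ^ 2) := by
        rw [abs_mul, abs_two]
        have h := mul_le_3 (abs_le_quartic η.1 η.2) (hC0 η) (hC1 η)
        calc 2 * |η.1 * V η * Dx V η|
            ≤ 2 * ((1 + η.1 ^ 2) ^ 2 * (1 + η.2 ^ 2) ^ 2 * C0 * C1) := by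
              exact mul_le_mul_of_nonneg_left h (by norm_num)
        _ = 2 * (C0 * C1) * ((1 + η.1 ^ 2) ^ 2 * (1 + η.2 ^ 2) ^ 2) := by ring
      have t3 : |η.1 ^ 2 * (V η) ^ 2 / 2|
          ≤ C0 ^ 2 / 2 * ((1 + η.1 ^ 2) ^ 2 * (1 + η.2 ^ 2) ^ 2) := by
        rw [abs_div]
        have h := mul_le_3 (habs_sq1 η) (hVsq η) (le_refl |(1:ℝ)|)
        rw [mul_one, abs_one, mul_one] at h
        calc |η.1 ^ 2 * (V η) ^ 2| / |(2:ℝ)|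
            = |η.1 ^ 2 * (V η) ^ 2| / 2 := by norm_num
        _ ≤ ((1 + η.1 ^ 2) ^ 2 * (1 + η.2 ^ 2) ^ 2 * C0 ^ 2) / 2 := by linarith
        _ = C0 ^ 2 / 2 * ((1 + η.1 ^ 2) ^ 2 * (1 + η.2 ^ 2) ^ 2) := by ring
      calc |(V η) ^ 2 + 2 * (η.1 * V η * Dx V η) - η.1 ^ 2 * (V η) ^ 2 / 2|
          ≤ |(V η) ^ 2 + 2 * (η.1 * V η * Dx V η)| + |η.1 ^ 2 * (V η) ^ 2 / 2| :=
            abs_sub_le'' _ _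
      _ ≤ |(V η) ^ 2| + |2 * (η.1 * V η * Dx V η)| + |η.1 ^ 2 * (V η) ^ 2 / 2| := by
            linarith [abs_add_le ((V η) ^ 2) (2 * (η.1 * V η * Dx V η))]
      _ ≤ (C0 ^ 2 + 2 * (C0 * C1) + C0 ^ 2 / 2)
            * ((1 + η.1 ^ 2) ^ 2 * (1 + η.2 ^ 2) ^ 2) := by
            rw [add_mul, add_mul]
            exact add_le_add (add_le_add t1 t2) t3
    · -- the derivative
      have hu := (hasDerivAt_id η.1).mul ((hasDerivAt_sect1 V η.1 η.2).pow 2)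
      have h := hu.mul ((hasDerivAt_p η.1).mul_const (p η.2))
      refine h.congr_deriv ?_
      rw [ρ]
      simp only [id_eq, Pi.mul_apply, Pi.pow_apply]
      push_cast
      ring
  -- IBP identity B : ∂₂ of (η₂ V² ρ)
  have hIBPB : ∫ η : ℝ × ℝ, ((V η) ^ 2 + 2 * (η.2 * V η * Dy V η)
      - η.2 ^ 2 * (V η) ^ 2 / 2) * ρ η = 0 := by
    refine ibp_gauss2 (G := fun η => η.2 * (V η) ^ 2)
      (continuous_snd.mul (V.continuous.pow 2))
      ((((V.continuous.pow 2)).add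
        ((continuous_const.mul ((continuous_snd.mul V.continuous).mul (Dy V).continuous)))).sub
        (((continuous_snd.pow 2).mul (V.continuous.pow 2)).div_const 2))
      (C0 ^ 2) (C0 ^ 2 + 2 * (C0 * C2) + C0 ^ 2 / 2) (fun η => ?_) (fun η => ?_) (fun η => ?_)
    · have h := mul_le_3 (abs2_le_quartic η.1 η.2) (hVsq η) (le_refl |(1:ℝ)|)
      rw [mul_one, abs_one, mul_one] at h
      calc |η.2 * (V η) ^ 2| ≤ (1 + η.1 ^ 2) ^ 2 * (1 + η.2 ^ 2) ^ 2 * C0 ^ 2 := h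
      _ = C0 ^ 2 * ((1 + η.1 ^ 2) ^ 2 * (1 + η.2 ^ 2) ^ 2) := by ring
    · have t1 : |(V η) ^ 2| ≤ C0 ^ 2 * ((1 + η.1 ^ 2) ^ 2 * (1 + η.2 ^ 2) ^ 2) :=
        (hVsq η).trans (le_mul_of_one_le_right (by positivity) (one_le_quartic _ _))
      have t2 : |2 * (η.2 * V η * Dy V η)|
          ≤ 2 * (C0 * C2) * ((1 + η.1 ^ 2) ^ 2 * (1 + η.2 ^ 2) ^ 2) := by
        rw [abs_mul, abs_two]
        have h := mul_le_3 (abs2_le_quartic η.1 η.2) (hC0 η) (hC2 η)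
        calc 2 * |η.2 * V η * Dy V η|
            ≤ 2 * ((1 + η.1 ^ 2) ^ 2 * (1 + η.2 ^ 2) ^ 2 * C0 * C2) := by
              exact mul_le_mul_of_nonneg_left h (by norm_num)
        _ = 2 * (C0 * C2) * ((1 + η.1 ^ 2) ^ 2 * (1 + η.2 ^ 2) ^ 2) := by ring
      have t3 : |η.2 ^ 2 * (V η) ^ 2 / 2|
          ≤ C0 ^ 2 / 2 * ((1 + η.1 ^ 2) ^ 2 * (1 + η.2 ^ 2) ^ 2) := by
        rw [abs_div]
        have h := mul_le_3 (habs_sq2 η) (hVsq η) (le_refl |(1:ℝ)|)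
        rw [mul_one, abs_one, mul_one] at h
        calc |η.2 ^ 2 * (V η) ^ 2| / |(2:ℝ)|
            = |η.2 ^ 2 * (V η) ^ 2| / 2 := by norm_num
        _ ≤ ((1 + η.1 ^ 2) ^ 2 * (1 + η.2 ^ 2) ^ 2 * C0 ^ 2) / 2 := by linarith
        _ = C0 ^ 2 / 2 * ((1 + η.1 ^ 2) ^ 2 * (1 + η.2 ^ 2) ^ 2) := by ring
      calc |(V η) ^ 2 + 2 * (η.2 * V η * Dy V η) - η.2 ^ 2 * (V η) ^ 2 / 2|
          ≤ |(V η) ^ 2 + 2 * (η.2 * V η * Dy V η)| + |η.2 ^ 2 * (V η) ^ 2 / 2| :=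
            abs_sub_le'' _ _
      _ ≤ |(V η) ^ 2| + |2 * (η.2 * V η * Dy V η)| + |η.2 ^ 2 * (V η) ^ 2 / 2| := by
            linarith [abs_add_le ((V η) ^ 2) (2 * (η.2 * V η * Dy V η))]
      _ ≤ (C0 ^ 2 + 2 * (C0 * C2) + C0 ^ 2 / 2)
            * ((1 + η.1 ^ 2) ^ 2 * (1 + η.2 ^ 2) ^ 2) := by
            rw [add_mul, add_mul]
            exact add_le_add (add_le_add t1 t2) t3
    · have hu := (hasDerivAt_id η.2).mul ((hasDerivAt_sect2 V η.1 η.2).pow 2)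
      have h := hu.mul ((hasDerivAt_p η.2).const_mul (p η.1))
      refine h.congr_deriv ?_
      rw [ρ]
      simp only [id_eq, Pi.mul_apply, Pi.pow_apply]
      push_cast
      ring
  -- IBP identity C : ∂₁ of (V (Dx V) ρ)
  have hIBPC : ∫ η : ℝ × ℝ, ((Dx V η) ^ 2 + V η * Dx (Dx V) η
      - η.1 / 2 * (V η * Dx V η)) * ρ η = 0 := by
    refine ibp_gauss1 (G := fun η => V η * Dx V η)
      (V.continuous.mul (Dx V).continuous)
      ((((Dx V).continuous.pow 2).add
        (V.continuous.mul (Dx (Dx V)).continuous)).sub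
        ((continuous_fst.div_const 2).mul (V.continuous.mul (Dx V).continuous)))
      (C0 * C1) (C1 ^ 2 + C0 * C3 + C0 * C1 / 2) (fun η => ?_) (fun η => ?_) (fun η => ?_)
    · rw [abs_mul]
      calc |V η| * |Dx V η| ≤ C0 * C1 :=
            mul_le_mul (hC0 η) (hC1 η) (abs_nonneg _) hC00
      _ ≤ C0 * C1 * ((1 + η.1 ^ 2) ^ 2 * (1 + η.2 ^ 2) ^ 2) :=
            le_mul_of_one_le_right (by positivity) (one_le_quartic _ _)
    · have t1 : |(Dx V η) ^ 2| ≤ C1 ^ 2 * ((1 + η.1 ^ 2) ^ 2 * (1 + η.2 ^ 2) ^ 2) :=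
        (hDxsq η).trans (le_mul_of_one_le_right (by positivity) (one_le_quartic _ _))
      have t2 : |V η * Dx (Dx V) η| ≤ C0 * C3 * ((1 + η.1 ^ 2) ^ 2 * (1 + η.2 ^ 2) ^ 2) := by
        rw [abs_mul]
        calc |V η| * |Dx (Dx V) η| ≤ C0 * C3 :=
              mul_le_mul (hC0 η) (hC3 η) (abs_nonneg _) hC00
        _ ≤ _ := le_mul_of_one_le_right (by positivity) (one_le_quartic _ _)
      have t3 : |η.1 / 2 * (V η * Dx V η)|
          ≤ C0 * C1 / 2 * ((1 + η.1 ^ 2) ^ 2 * (1 + η.2 ^ 2) ^ 2) := by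
        rw [abs_mul, abs_div]
        have h1 : |V η * Dx V η| ≤ C0 * C1 := by
          rw [abs_mul]; exact mul_le_mul (hC0 η) (hC1 η) (abs_nonneg _) hC00
        have h2 : |η.1| ≤ (1 + η.1 ^ 2) ^ 2 * (1 + η.2 ^ 2) ^ 2 := abs_le_quartic η.1 η.2
        calc |η.1| / |(2:ℝ)| * |V η * Dx V η| = |η.1| * |V η * Dx V η| / 2 := by
              rw [abs_two]; ring
        _ ≤ ((1 + η.1 ^ 2) ^ 2 * (1 + η.2 ^ 2) ^ 2) * (C0 * C1) / 2 := by
              have := mul_le_mul h2 h1 (abs_nonneg _) (hQ0 η)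
              linarith
        _ = C0 * C1 / 2 * ((1 + η.1 ^ 2) ^ 2 * (1 + η.2 ^ 2) ^ 2) := by ring
      calc |(Dx V η) ^ 2 + V η * Dx (Dx V) η - η.1 / 2 * (V η * Dx V η)|
          ≤ |(Dx V η) ^ 2 + V η * Dx (Dx V) η| + |η.1 / 2 * (V η * Dx V η)| :=
            abs_sub_le'' _ _
      _ ≤ |(Dx V η) ^ 2| + |V η * Dx (Dx V) η| + |η.1 / 2 * (V η * Dx V η)| := by
            linarith [abs_add_le ((Dx V η) ^ 2) (V η * Dx (Dx V) η)]
      _ ≤ (C1 ^ 2 + C0 * C3 + C0 * C1 / 2)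
            * ((1 + η.1 ^ 2) ^ 2 * (1 + η.2 ^ 2) ^ 2) := by
            rw [add_mul, add_mul]
            exact add_le_add (add_le_add t1 t2) t3
    · have hu := (hasDerivAt_sect1 V η.1 η.2).mul (hasDerivAt_sect1 (Dx V) η.1 η.2)
      have h := hu.mul ((hasDerivAt_p η.1).mul_const (p η.2))
      refine h.congr_deriv ?_
      rw [ρ]
      simp only [Pi.mul_apply]
      ring
  -- IBP identity D : ∂₂ of (V (Dy V) ρ)
  have hIBPD : ∫ η : ℝ × ℝ, ((Dy V η) ^ 2 + V η * Dy (Dy V) η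
      - η.2 / 2 * (V η * Dy V η)) * ρ η = 0 := by
    refine ibp_gauss2 (G := fun η => V η * Dy V η)
      (V.continuous.mul (Dy V).continuous)
      ((((Dy V).continuous.pow 2).add
        (V.continuous.mul (Dy (Dy V)).continuous)).sub
        ((continuous_snd.div_const 2).mul (V.continuous.mul (Dy V).continuous)))
      (C0 * C2) (C2 ^ 2 + C0 * C4 + C0 * C2 / 2) (fun η => ?_) (fun η => ?_) (fun η => ?_)
    · rw [abs_mul]
      calc |V η| * |Dy V η| ≤ C0 * C2 :=
            mul_le_mul (hC0 η) (hC2 η) (abs_nonneg _) hC00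
      _ ≤ C0 * C2 * ((1 + η.1 ^ 2) ^ 2 * (1 + η.2 ^ 2) ^ 2) :=
            le_mul_of_one_le_right (by positivity) (one_le_quartic _ _)
    · have t1 : |(Dy V η) ^ 2| ≤ C2 ^ 2 * ((1 + η.1 ^ 2) ^ 2 * (1 + η.2 ^ 2) ^ 2) :=
        (hDysq η).trans (le_mul_of_one_le_right (by positivity) (one_le_quartic _ _))
      have t2 : |V η * Dy (Dy V) η| ≤ C0 * C4 * ((1 + η.1 ^ 2) ^ 2 * (1 + η.2 ^ 2) ^ 2) := by
        rw [abs_mul]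
        calc |V η| * |Dy (Dy V) η| ≤ C0 * C4 :=
              mul_le_mul (hC0 η) (hC4 η) (abs_nonneg _) hC00
        _ ≤ _ := le_mul_of_one_le_right (by positivity) (one_le_quartic _ _)
      have t3 : |η.2 / 2 * (V η * Dy V η)|
          ≤ C0 * C2 / 2 * ((1 + η.1 ^ 2) ^ 2 * (1 + η.2 ^ 2) ^ 2) := by
        rw [abs_mul, abs_div]
        have h1 : |V η * Dy V η| ≤ C0 * C2 := by
          rw [abs_mul]; exact mul_le_mul (hC0 η) (hC2 η) (abs_nonneg _) hC00
        have h2 : |η.2| ≤ (1 + η.1 ^ 2) ^ 2 * (1 + η.2 ^ 2) ^ 2 := abs2_le_quartic η.1 η.2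
        calc |η.2| / |(2:ℝ)| * |V η * Dy V η| = |η.2| * |V η * Dy V η| / 2 := by
              rw [abs_two]; ring
        _ ≤ ((1 + η.1 ^ 2) ^ 2 * (1 + η.2 ^ 2) ^ 2) * (C0 * C2) / 2 := by
              have := mul_le_mul h2 h1 (abs_nonneg _) (hQ0 η)
              linarith
        _ = C0 * C2 / 2 * ((1 + η.1 ^ 2) ^ 2 * (1 + η.2 ^ 2) ^ 2) := by ring
      calc |(Dy V η) ^ 2 + V η * Dy (Dy V) η - η.2 / 2 * (V η * Dy V η)|
          ≤ |(Dy V η) ^ 2 + V η * Dy (Dy V) η| + |η.2 / 2 * (V η * Dy V η)| :=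
            abs_sub_le'' _ _
      _ ≤ |(Dy V η) ^ 2| + |V η * Dy (Dy V) η| + |η.2 / 2 * (V η * Dy V η)| := by
            linarith [abs_add_le ((Dy V η) ^ 2) (V η * Dy (Dy V) η)]
      _ ≤ (C2 ^ 2 + C0 * C4 + C0 * C2 / 2)
            * ((1 + η.1 ^ 2) ^ 2 * (1 + η.2 ^ 2) ^ 2) := by
            rw [add_mul, add_mul]
            exact add_le_add (add_le_add t1 t2) t3
    · have hu := (hasDerivAt_sect2 V η.1 η.2).mul (hasDerivAt_sect2 (Dy V) η.1 η.2)
      have h := hu.mul ((hasDerivAt_p η.2).const_mul (p η.1))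
      refine h.congr_deriv ?_
      rw [ρ]
      simp only [Pi.mul_apply]
      ring
  -- split the IBP identities into atoms
  have hA : A1 + 2 * A4 - (1 / 2) * A2 = 0 := by
    have e : ∀ η : ℝ × ℝ, ((V η) ^ 2 + 2 * (η.1 * V η * Dx V η)
        - η.1 ^ 2 * (V η) ^ 2 / 2) * ρ η
        = ((V η) ^ 2 * ρ η + 2 * (η.1 * V η * Dx V η * ρ η))
          - (1 / 2) * (η.1 ^ 2 * (V η) ^ 2 * ρ η) := fun η => by ring
    rw [show (0:ℝ) = ∫ η : ℝ × ℝ, ((V η) ^ 2 + 2 * (η.1 * V η * Dx V η)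
        - η.1 ^ 2 * (V η) ^ 2 / 2) * ρ η from hIBPA.symm]
    simp_rw [e]
    have i1 : Integrable (fun η : ℝ × ℝ =>
        (V η) ^ 2 * ρ η + 2 * (η.1 * V η * Dx V η * ρ η)) := int1.add (int4.const_mul 2)
    rw [integral_sub i1 (int2.const_mul (1 / 2)),
      integral_add int1 (int4.const_mul 2), integral_const_mul, integral_const_mul]
  have hB : A1 + 2 * A5 - (1 / 2) * A3 = 0 := by
    have e : ∀ η : ℝ × ℝ, ((V η) ^ 2 + 2 * (η.2 * V η * Dy V η)
        - η.2 ^ 2 * (V η) ^ 2 / 2) * ρ η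
        = ((V η) ^ 2 * ρ η + 2 * (η.2 * V η * Dy V η * ρ η))
          - (1 / 2) * (η.2 ^ 2 * (V η) ^ 2 * ρ η) := fun η => by ring
    rw [show (0:ℝ) = ∫ η : ℝ × ℝ, ((V η) ^ 2 + 2 * (η.2 * V η * Dy V η)
        - η.2 ^ 2 * (V η) ^ 2 / 2) * ρ η from hIBPB.symm]
    simp_rw [e]
    have i1 : Integrable (fun η : ℝ × ℝ =>
        (V η) ^ 2 * ρ η + 2 * (η.2 * V η * Dy V η * ρ η)) := int1.add (int5.const_mul 2)
    rw [integral_sub i1 (int3.const_mul (1 / 2)),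
      integral_add int1 (int5.const_mul 2), integral_const_mul, integral_const_mul]
  have hC : A6 + A8 - (1 / 2) * A4 = 0 := by
    have e : ∀ η : ℝ × ℝ, ((Dx V η) ^ 2 + V η * Dx (Dx V) η
        - η.1 / 2 * (V η * Dx V η)) * ρ η
        = ((Dx V η) ^ 2 * ρ η + V η * Dx (Dx V) η * ρ η)
          - (1 / 2) * (η.1 * V η * Dx V η * ρ η) := fun η => by ring
    rw [show (0:ℝ) = ∫ η : ℝ × ℝ, ((Dx V η) ^ 2 + V η * Dx (Dx V) η
        - η.1 / 2 * (V η * Dx V η)) * ρ η from hIBPC.symm]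
    simp_rw [e]
    have i1 : Integrable (fun η : ℝ × ℝ =>
        (Dx V η) ^ 2 * ρ η + V η * Dx (Dx V) η * ρ η) := int6.add int8
    rw [integral_sub i1 (int4.const_mul (1 / 2)),
      integral_add int6 int8, integral_const_mul]
  have hD : A7 + A9 - (1 / 2) * A5 = 0 := by
    have e : ∀ η : ℝ × ℝ, ((Dy V η) ^ 2 + V η * Dy (Dy V) η
        - η.2 / 2 * (V η * Dy V η)) * ρ η
        = ((Dy V η) ^ 2 * ρ η + V η * Dy (Dy V) η * ρ η)
          - (1 / 2) * (η.2 * V η * Dy V η * ρ η) := fun η => by ring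
    rw [show (0:ℝ) = ∫ η : ℝ × ℝ, ((Dy V η) ^ 2 + V η * Dy (Dy V) η
        - η.2 / 2 * (V η * Dy V η)) * ρ η from hIBPD.symm]
    simp_rw [e]
    have i1 : Integrable (fun η : ℝ × ℝ =>
        (Dy V η) ^ 2 * ρ η + V η * Dy (Dy V) η * ρ η) := int7.add int9
    rw [integral_sub i1 (int5.const_mul (1 / 2)),
      integral_add int7 int9, integral_const_mul]
  -- the four theorem integrals in terms of atoms
  have hIW2 : ∫ η : ℝ × ℝ, (Wf V η) ^ 2 * wt η = A1 := by
    have e : ∀ η : ℝ × ℝ, (Wf V η) ^ 2 * wt η = (V η) ^ 2 * ρ η := by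
      intro η
      calc (Wf V η) ^ 2 * wt η = (V η) ^ 2 * ρ η * (ρ η * wt η) := by rw [Wf]; ring
      _ = (V η) ^ 2 * ρ η := by rw [ρ_mul_wt, mul_one]
    simp_rw [e]
    rfl
  have hIQ : ∫ η : ℝ × ℝ, (η.1 ^ 2 + η.2 ^ 2) * (Wf V η) ^ 2 * wt η = A2 + A3 := by
    have e : ∀ η : ℝ × ℝ, (η.1 ^ 2 + η.2 ^ 2) * (Wf V η) ^ 2 * wt η
        = η.1 ^ 2 * (V η) ^ 2 * ρ η + η.2 ^ 2 * (V η) ^ 2 * ρ η := by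
      intro η
      calc (η.1 ^ 2 + η.2 ^ 2) * (Wf V η) ^ 2 * wt η
          = (η.1 ^ 2 * (V η) ^ 2 * ρ η + η.2 ^ 2 * (V η) ^ 2 * ρ η) * (ρ η * wt η) := by
            rw [Wf]; ring
      _ = _ := by rw [ρ_mul_wt, mul_one]
    simp_rw [e]
    exact integral_add int2 int3
  have hIG : ∫ η : ℝ × ℝ, ((pd1 (Wf V) η) ^ 2 + (pd2 (Wf V) η) ^ 2) * wt η
      = ((A6 + A7) - (A4 + A5)) + (1 / 4) * (A2 + A3) := by
    have e : ∀ η : ℝ × ℝ, ((pd1 (Wf V) η) ^ 2 + (pd2 (Wf V) η) ^ 2) * wt η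
        = ((Dx V η) ^ 2 * ρ η + (Dy V η) ^ 2 * ρ η
            - (η.1 * V η * Dx V η * ρ η + η.2 * V η * Dy V η * ρ η))
          + (1 / 4) * (η.1 ^ 2 * (V η) ^ 2 * ρ η + η.2 ^ 2 * (V η) ^ 2 * ρ η) := by
      intro η
      rw [pd1_Wf, pd2_Wf]
      show (((Dx V η - η.1 / 2 * V η) * ρ η) ^ 2 + ((Dy V η - η.2 / 2 * V η) * ρ η) ^ 2) * wt η = _
      calc (((Dx V η - η.1 / 2 * V η) * ρ η) ^ 2 + ((Dy V η - η.2 / 2 * V η) * ρ η) ^ 2) * wt η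
          = (((Dx V η - η.1 / 2 * V η) ^ 2 + (Dy V η - η.2 / 2 * V η) ^ 2) * ρ η) * (ρ η * wt η) := by
            ring
      _ = ((Dx V η - η.1 / 2 * V η) ^ 2 + (Dy V η - η.2 / 2 * V η) ^ 2) * ρ η := by
            rw [ρ_mul_wt, mul_one]
      _ = _ := by ring
    simp_rw [e]
    have i67 : Integrable (fun η : ℝ × ℝ => (Dx V η) ^ 2 * ρ η + (Dy V η) ^ 2 * ρ η) :=
      int6.add int7
    have i45 : Integrable (fun η : ℝ × ℝ =>
        η.1 * V η * Dx V η * ρ η + η.2 * V η * Dy V η * ρ η) := int4.add int5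
    have i23 : Integrable (fun η : ℝ × ℝ =>
        η.1 ^ 2 * (V η) ^ 2 * ρ η + η.2 ^ 2 * (V η) ^ 2 * ρ η) := int2.add int3
    have isub : Integrable (fun η : ℝ × ℝ =>
        ((Dx V η) ^ 2 * ρ η + (Dy V η) ^ 2 * ρ η)
          - (η.1 * V η * Dx V η * ρ η + η.2 * V η * Dy V η * ρ η)) := i67.sub i45
    rw [integral_add isub (i23.const_mul (1 / 4)),
      integral_sub i67 i45,
      integral_add int6 int7, integral_add int4 int5, integral_const_mul,
      integral_add int2 int3]
  have hIL : ∫ η : ℝ × ℝ, Wf V η * LFP (Wf V) η * wt η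
      = (A8 + A9) - (1 / 2) * (A4 + A5) := by
    have e : ∀ η : ℝ × ℝ, Wf V η * LFP (Wf V) η * wt η
        = (V η * Dx (Dx V) η * ρ η + V η * Dy (Dy V) η * ρ η)
          - (1 / 2) * (η.1 * V η * Dx V η * ρ η + η.2 * V η * Dy V η * ρ η) := by
      intro η
      rw [LFP_Wf, Wf]
      calc V η * ρ η * ((Dx (Dx V) η + Dy (Dy V) η
              - 1 / 2 * (η.1 * Dx V η + η.2 * Dy V η)) * ρ η) * wt η
          = ((V η * Dx (Dx V) η * ρ η + V η * Dy (Dy V) η * ρ η)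
              - (1 / 2) * (η.1 * V η * Dx V η * ρ η + η.2 * V η * Dy V η * ρ η))
            * (ρ η * wt η) := by ring
      _ = _ := by rw [ρ_mul_wt, mul_one]
    simp_rw [e]
    have i89 : Integrable (fun η : ℝ × ℝ =>
        V η * Dx (Dx V) η * ρ η + V η * Dy (Dy V) η * ρ η) := int8.add int9
    have i45 : Integrable (fun η : ℝ × ℝ =>
        η.1 * V η * Dx V η * ρ η + η.2 * V η * Dy V η * ρ η) := int4.add int5
    rw [integral_sub i89 (i45.const_mul (1 / 2)),
      integral_add int8 int9, integral_const_mul, integral_add int4 int5]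
  -- nonnegativity
  have nn1 : 0 ≤ A1 := integral_nonneg fun η => mul_nonneg (sq_nonneg _) (ρ_nonneg η)
  have nn2 : 0 ≤ A2 := integral_nonneg fun η =>
    mul_nonneg (mul_nonneg (sq_nonneg _) (sq_nonneg _)) (ρ_nonneg η)
  have nn3 : 0 ≤ A3 := integral_nonneg fun η =>
    mul_nonneg (mul_nonneg (sq_nonneg _) (sq_nonneg _)) (ρ_nonneg η)
  have nn6 : 0 ≤ A6 := integral_nonneg fun η => mul_nonneg (sq_nonneg _) (ρ_nonneg η)
  have nn7 : 0 ≤ A7 := integral_nonneg fun η => mul_nonneg (sq_nonneg _) (ρ_nonneg η)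
  -- pointwise AM–GM bounds
  have am4 : A4 ≤ (1 / 8) * A2 + 2 * A6 := by
    have pw : ∀ η : ℝ × ℝ, η.1 * V η * Dx V η * ρ η
        ≤ ((1 / 8) * (η.1 ^ 2 * (V η) ^ 2) + 2 * (Dx V η) ^ 2) * ρ η := by
      intro η
      refine mul_le_mul_of_nonneg_right ?_ (ρ_nonneg η)
      nlinarith [sq_nonneg (η.1 * V η - 4 * Dx V η)]
    have hrhs : Integrable (fun η : ℝ × ℝ =>
        ((1 / 8) * (η.1 ^ 2 * (V η) ^ 2) + 2 * (Dx V η) ^ 2) * ρ η) := by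
      have : Integrable (fun η : ℝ × ℝ =>
          (1 / 8) * (η.1 ^ 2 * (V η) ^ 2 * ρ η) + 2 * ((Dx V η) ^ 2 * ρ η)) :=
        (int2.const_mul (1 / 8)).add (int6.const_mul 2)
      refine this.congr (Eventually.of_forall fun η => ?_)
      ring
    have h := integral_mono int4 hrhs pw
    have e : ∫ η : ℝ × ℝ, ((1 / 8) * (η.1 ^ 2 * (V η) ^ 2) + 2 * (Dx V η) ^ 2) * ρ η
        = (1 / 8) * A2 + 2 * A6 := by
      have e2 : ∀ η : ℝ × ℝ, ((1 / 8) * (η.1 ^ 2 * (V η) ^ 2) + 2 * (Dx V η) ^ 2) * ρ η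
          = (1 / 8) * (η.1 ^ 2 * (V η) ^ 2 * ρ η) + 2 * ((Dx V η) ^ 2 * ρ η) := fun η => by ring
      simp_rw [e2]
      rw [integral_add (int2.const_mul (1 / 8)) (int6.const_mul 2),
        integral_const_mul, integral_const_mul]
    rw [e] at h
    exact h
  have am5 : A5 ≤ (1 / 8) * A3 + 2 * A7 := by
    have pw : ∀ η : ℝ × ℝ, η.2 * V η * Dy V η * ρ η
        ≤ ((1 / 8) * (η.2 ^ 2 * (V η) ^ 2) + 2 * (Dy V η) ^ 2) * ρ η := by
      intro η
      refine mul_le_mul_of_nonneg_right ?_ (ρ_nonneg η)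
      nlinarith [sq_nonneg (η.2 * V η - 4 * Dy V η)]
    have hrhs : Integrable (fun η : ℝ × ℝ =>
        ((1 / 8) * (η.2 ^ 2 * (V η) ^ 2) + 2 * (Dy V η) ^ 2) * ρ η) := by
      have : Integrable (fun η : ℝ × ℝ =>
          (1 / 8) * (η.2 ^ 2 * (V η) ^ 2 * ρ η) + 2 * ((Dy V η) ^ 2 * ρ η)) :=
        (int3.const_mul (1 / 8)).add (int7.const_mul 2)
      refine this.congr (Eventually.of_forall fun η => ?_)
      ring
    have h := integral_mono int5 hrhs pw
    have e : ∫ η : ℝ × ℝ, ((1 / 8) * (η.2 ^ 2 * (V η) ^ 2) + 2 * (Dy V η) ^ 2) * ρ η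
        = (1 / 8) * A3 + 2 * A7 := by
      have e2 : ∀ η : ℝ × ℝ, ((1 / 8) * (η.2 ^ 2 * (V η) ^ 2) + 2 * (Dy V η) ^ 2) * ρ η
          = (1 / 8) * (η.2 ^ 2 * (V η) ^ 2 * ρ η) + 2 * ((Dy V η) ^ 2 * ρ η) := fun η => by ring
      simp_rw [e2]
      rw [integral_add (int3.const_mul (1 / 8)) (int7.const_mul 2),
        integral_const_mul, integral_const_mul]
    rw [e] at h
    exact h
  -- Poincaré
  have hpoin : A1 ≤ 2 * (A6 + A7) := by
    have h := poincare2D V hmean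
    have e : ∫ η : ℝ × ℝ, ((Dx V η) ^ 2 + (Dy V η) ^ 2) * ρ η = A6 + A7 := by
      have e2 : ∀ η : ℝ × ℝ, ((Dx V η) ^ 2 + (Dy V η) ^ 2) * ρ η
          = (Dx V η) ^ 2 * ρ η + (Dy V η) ^ 2 * ρ η := fun η => by ring
      simp_rw [e2]
      exact integral_add int6 int7
    rw [e] at h
    exact h
  constructor
  · rw [hIL, hIW2, hIG]
    linarith
  · rw [hIL, hIW2, hIQ, hIG]
    linarith

end FP

/-- shifted spectral-gap inequality for `L` in `Y = L²(e^{|η|²/4}dη)`: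
for smooth rapidly decaying `W` (i.e. `W = e^{-|η|²/4} V` with `V` Schwartz) of zero mean,
`⟨W, LW⟩_Y = ‖W‖²_Y − ‖∇W‖²_Y ≤ −(1/12)‖W‖²_Y − (1/96)‖ηW‖²_Y − (1/6)‖∇W‖²_Y`. -/
theorem fokker_planck_spectral_gap :
    ∀ (V : SchwartzMap (ℝ × ℝ) ℝ) (W : ℝ × ℝ → ℝ),
      (∀ η : ℝ × ℝ, W η = Real.exp (-(η.1 ^ 2 + η.2 ^ 2) / 4) * V η) →
      (∫ η : ℝ × ℝ, W η) = 0 →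
      (∫ η : ℝ × ℝ, W η * LFP W η * wt η)
          = (∫ η : ℝ × ℝ, (W η) ^ 2 * wt η)
            - (∫ η : ℝ × ℝ, ((pd1 W η) ^ 2 + (pd2 W η) ^ 2) * wt η) ∧
      (∫ η : ℝ × ℝ, W η * LFP W η * wt η)
          ≤ -(1 / 12) * (∫ η : ℝ × ℝ, (W η) ^ 2 * wt η)
            - (1 / 96) * (∫ η : ℝ × ℝ, (η.1 ^ 2 + η.2 ^ 2) * (W η) ^ 2 * wt η)
            - (1 / 6) * (∫ η : ℝ × ℝ, ((pd1 W η) ^ 2 + (pd2 W η) ^ 2) * wt η) := by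
  intro V W hW hmean0
  have hWf : W = FP.Wf V := by
    funext η
    rw [hW η, FP.Wf, FP.ρ_eq]
    ring
  subst hWf
  have hmean : ∫ η : ℝ × ℝ, V η * FP.ρ η = 0 := hmean0
  exact FP.main_core V hmean
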